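/- arXiv:1205.3817 — 9 statements merged into one kernel-verified Lean document; each statement's English description precedes it below -/
import Mathlib

section
/- Let C ⊆ ℝⁿ be a closed cone (a closed set containing 0 that is stable under multiplication by nonnegative real scalars), let B be a nondegenerate bilinear form on ℝⁿ, and let C* = {x ∈ ℝⁿ : B(x,c) ≥ 0 for all c ∈ C} be the dual cone of C with respect to B. Then the topological interior of C* is exactly the set {x ∈ ℝⁿ : B(x,c) > 0 for all c ∈ C with c ≠ 0}. -/
/-- The interior of the dual cone (w.r.t. a nondegenerate bilinear form `B`) of a
closed cone `C ⊆ ℝⁿ` is exactly the set of vectors pairing strictly positively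
with every nonzero element of `C`. -/
theorem interior_dualCone_eq (n : ℕ) (C : Set (Fin n → ℝ))
    (hC_closed : IsClosed C) (hC0 : (0 : Fin n → ℝ) ∈ C)
    (hC_cone : ∀ t : ℝ, 0 ≤ t → ∀ x ∈ C, t • x ∈ C)
    (B : (Fin n → ℝ) →ₗ[ℝ] (Fin n → ℝ) →ₗ[ℝ] ℝ)
    (hB : LinearMap.BilinForm.Nondegenerate B) :
    interior {x : Fin n → ℝ | ∀ c ∈ C, 0 ≤ B x c} =
      {x : Fin n → ℝ | ∀ c ∈ C, c ≠ 0 → 0 < B x c} := by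
  set D : Set (Fin n → ℝ) := {x : Fin n → ℝ | ∀ c ∈ C, 0 ≤ B x c} with hD
  -- continuity of the bilinear form
  have hL : Continuous fun p : (Fin n → ℝ) × (Fin n → ℝ) => B p.1 p.2 := by
    let L : (Fin n → ℝ) →ₗ[ℝ] ((Fin n → ℝ) →L[ℝ] ℝ) :=
      (LinearMap.toContinuousLinearMap : ((Fin n → ℝ) →ₗ[ℝ] ℝ) ≃ₗ[ℝ] ((Fin n → ℝ) →L[ℝ] ℝ)).toLinearMap ∘ₗ B
    have hLc : Continuous L := L.continuous_of_finiteDimensional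
    have : Continuous fun p : (Fin n → ℝ) × (Fin n → ℝ) => (L p.1) p.2 := by
      exact isBoundedBilinearMap_apply.continuous.comp
        ((hLc.comp continuous_fst).prodMk continuous_snd)
    convert this using 2
    rfl
  ext x
  constructor
  · intro hx c hc hc0
    have hxD : x ∈ D := interior_subset hx
    -- find y with B y c < 0
    obtain ⟨z, hz⟩ : ∃ z, B z c ≠ 0 := by
      by_contra h
      push_neg at h
      exact hc0 (hB.2 c (fun m => h m))
    have ⟨y, hy⟩ : ∃ y, B y c < 0 := by
      rcases lt_or_gt_of_ne hz with h | h
      · exact ⟨z, h⟩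
      · exact ⟨-z, by simp [h]⟩
    -- small perturbation stays in D
    obtain ⟨ε, hε, hball⟩ := Metric.isOpen_iff.mp isOpen_interior x hx
    set t : ℝ := ε / (2 * (‖y‖ + 1)) with ht
    have hypos : (0:ℝ) < ‖y‖ + 1 := by positivity
    have htpos : 0 < t := by positivity
    have hmem : x + t • y ∈ D := by
      apply interior_subset
      apply hball
      have : ‖(x + t • y) - x‖ = t * ‖y‖ := by
        simp [norm_smul, abs_of_pos htpos]
      rw [Metric.mem_ball, dist_eq_norm, this]
      have h2 : t * (‖y‖ + 1) = ε / 2 := by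
        rw [ht]; field_simp
      nlinarith
    have := hmem c hc
    simp only [map_add, map_smul, LinearMap.add_apply, LinearMap.smul_apply,
      smul_eq_mul] at this
    nlinarith
  · intro hx
    simp only [Set.mem_setOf_eq] at hx
    set S : Set (Fin n → ℝ) := C ∩ Metric.sphere 0 1 with hS
    have hScomp : IsCompact S := by
      apply (isCompact_closedBall (0:Fin n → ℝ) 1).of_isClosed_subset
        (hC_closed.inter Metric.isClosed_sphere)
      intro c hc
      have := hc.2
      simp only [Metric.mem_sphere, dist_zero_right] at this
      simp [Metric.mem_closedBall, dist_zero_right, this.le]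
    by_cases hSne : S.Nonempty
    · -- tube lemma
      have hsub : ({x} : Set (Fin n → ℝ)) ×ˢ S ⊆ {p : (Fin n → ℝ) × (Fin n → ℝ) | 0 < B p.1 p.2} := by
        rintro ⟨a, c⟩ ⟨ha, hcS⟩
        simp only [Set.mem_singleton_iff] at ha
        subst ha
        have hc0 : c ≠ 0 := by
          intro h
          have := hcS.2
          simp [h] at this
        exact hx c hcS.1 hc0
      obtain ⟨u, v, hu, hv, hxu, hSv, huv⟩ :=
        generalized_tube_lemma isCompact_singleton hScomp
          (hL.isOpen_preimage _ isOpen_Ioi) hsub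
      apply mem_interior.mpr ⟨u, ?_, hu, hxu rfl⟩
      intro y hyu c hc
      rcases eq_or_ne c 0 with rfl | hc0
      · simp
      · have hcn : (0:ℝ) < ‖c‖ := norm_pos_iff.mpr hc0
        have hcs : (‖c‖⁻¹ • c) ∈ S := by
          refine ⟨hC_cone _ (by positivity) c hc, ?_⟩
          simp [norm_smul, abs_of_pos (inv_pos.mpr hcn), inv_mul_cancel₀ (ne_of_gt hcn)]
        have : (y, ‖c‖⁻¹ • c) ∈ {p : (Fin n → ℝ) × (Fin n → ℝ) | 0 < B p.1 p.2} :=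
          huv ⟨hyu, hSv hcs⟩
        simp only [Set.mem_setOf_eq, map_smul, smul_eq_mul] at this
        have h2 : 0 < B y c := by
          have := mul_pos hcn this
          rwa [← mul_assoc, mul_inv_cancel₀ (ne_of_gt hcn), one_mul] at this
        exact h2.le
    · -- C = {0}, D = univ
      have hCsub : ∀ c ∈ C, c = 0 := by
        intro c hc
        by_contra hc0
        have hcn : (0:ℝ) < ‖c‖ := norm_pos_iff.mpr hc0
        exact hSne ⟨‖c‖⁻¹ • c, hC_cone _ (by positivity) c hc,
          by simp [norm_smul, abs_of_pos (inv_pos.mpr hcn), inv_mul_cancel₀ (ne_of_gt hcn)]⟩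
      have : D = Set.univ := by
        ext y
        simp only [Set.mem_setOf_eq, Set.mem_univ, iff_true, hD]
        intro c hc
        rw [hCsub c hc]
        simp
      rw [hD] at this ⊢
      rw [this]
      simp
end

section
/- Let C ⊆ ℝⁿ be a convex cone with nonempty interior and let f : ℝⁿ → ℝ be a linear functional such that f(v) ≤ 0 for some nonzero vector v in the closure of C. Then the set {x ∈ C : f(x) ≤ 1} has infinite Lebesgue measure. -/
open MeasureTheory Metric

set_option maxHeartbeats 1000000

/-- If `C ⊆ ℝⁿ` is a convex cone with nonempty interior and `f` is a linear functional
with `f v ≤ 0` for some nonzero `v` in the closure of `C`, then the slice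
`{x ∈ C | f x ≤ 1}` has infinite Lebesgue measure. -/
theorem slice_of_cone_infinite_volume (n : ℕ) (C : Set (Fin n → ℝ))
    (hC_convex : Convex ℝ C)
    (hC_cone : ∀ t : ℝ, 0 ≤ t → ∀ x ∈ C, t • x ∈ C)
    (hC_int : (interior C).Nonempty)
    (f : (Fin n → ℝ) →ₗ[ℝ] ℝ)
    (v : Fin n → ℝ) (hv_mem : v ∈ closure C) (hv_ne : v ≠ 0) (hv : f v ≤ 0) :
    volume {x ∈ C | f x ≤ 1} = ⊤ := by
  have hC_add : ∀ x ∈ C, ∀ y ∈ C, x + y ∈ C := by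
    intro x hx y hy
    have h := hC_convex hx hy (by norm_num : (0:ℝ) ≤ 1/2) (by norm_num : (0:ℝ) ≤ 1/2)
      (by norm_num)
    have h2 := hC_cone 2 (by norm_num) _ h
    convert h2 using 1
    module
  obtain ⟨x₀, hx₀⟩ := hC_int
  obtain ⟨ε, hε, hball⟩ := Metric.isOpen_iff.mp isOpen_interior x₀ hx₀
  have hballC : ball x₀ ε ⊆ C := hball.trans interior_subset
  set F := LinearMap.toContinuousLinearMap f with hF
  have hFf : ∀ y, F y = f y := fun y => rfl
  set M := ‖F‖ with hM
  have hM0 : 0 ≤ M := norm_nonneg _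
  have hfb : ∀ y : Fin n → ℝ, f y ≤ M * ‖y‖ := by
    intro y
    have := F.le_opNorm y
    rw [hFf, Real.norm_eq_abs] at this
    exact (le_abs_self _).trans this
  set D : ℝ := |f x₀| + M * ε + 1 with hD
  have hD0 : 0 < D := by positivity
  set s : ℝ := 1 / D with hs
  have hs0 : 0 < s := by positivity
  have hvnorm : 0 < ‖v‖ := norm_pos_iff.mpr hv_ne
  set r : ℝ := s * ε / 2 with hr
  have hr0 : 0 < r := by positivity
  set R : ℝ := 2 * s * ε / ‖v‖ with hRdef
  have hR0 : 0 < R := by positivity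
  set c : ℕ → (Fin n → ℝ) := fun k => s • x₀ + ((k : ℝ) * R) • v with hc
  -- scaled ball inside C
  have hsball : ball (s • x₀) (s * ε) ⊆ C := by
    intro z hz
    have h1 : (1/s) • z ∈ ball x₀ ε := by
      rw [mem_ball] at hz ⊢
      rw [dist_eq_norm] at hz ⊢
      have heq : (1/s) • z - x₀ = (1/s) • (z - s • x₀) := by
        rw [smul_sub, smul_smul]
        field_simp
        rw [one_smul]
      rw [heq, norm_smul, Real.norm_eq_abs, abs_of_pos (by positivity)]
      calc 1/s * ‖z - s • x₀‖ < 1/s * (s * ε) := by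
            apply mul_lt_mul_of_pos_left hz (by positivity)
        _ = ε := by field_simp
    have := hC_cone s hs0.le _ (hballC h1)
    rwa [smul_smul, mul_one_div, div_self hs0.ne', one_smul] at this
  -- each ball around c k is in C
  have hmemC : ∀ k : ℕ, ball (c k) r ⊆ C := by
    intro k x hx
    have hw : ((k : ℝ) * R) • v ∈ closure C :=
      map_mem_closure (continuous_const_smul _) hv_mem
        (fun y hy => hC_cone _ (by positivity) y hy)
    -- pick w' ∈ C close to the translate
    obtain ⟨w', hw'C, hw'close⟩ := Metric.mem_closure_iff.mp hw r hr0
    have hy : x - w' ∈ ball (s • x₀) (s * ε) := by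
      rw [mem_ball, dist_eq_norm]
      have : x - w' - s • x₀ = (x - c k) + (((k:ℝ) * R) • v - w') := by
        simp only [hc]; abel
      rw [this]
      calc ‖(x - c k) + (((k:ℝ) * R) • v - w')‖
          ≤ ‖x - c k‖ + ‖((k:ℝ) * R) • v - w'‖ := norm_add_le _ _
        _ < r + r := by
            apply add_lt_add
            · rw [← dist_eq_norm]; exact mem_ball.mp hx
            · rw [← dist_eq_norm]; exact hw'close
        _ = s * ε := by rw [hr]; ring
    have := hC_add _ (hsball hy) _ hw'C
    simpa using this
  -- f ≤ 1 on each ball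
  have hfle : ∀ k : ℕ, ∀ x ∈ ball (c k) r, f x ≤ 1 := by
    intro k x hx
    have h1 : f x = f (x - c k) + (s * f x₀ + ((k:ℝ) * R) * f v) := by
      have hck : f (c k) = s * f x₀ + ((k:ℝ) * R) * f v := by
        simp only [hc, map_add, LinearMap.map_smul, smul_eq_mul]
      rw [map_sub, hck]; ring
    have h2 : f (x - c k) ≤ M * r := by
      calc f (x - c k) ≤ M * ‖x - c k‖ := hfb _
        _ ≤ M * r := by
            apply mul_le_mul_of_nonneg_left _ hM0
            rw [← dist_eq_norm]; exact (mem_ball.mp hx).le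
    have h3 : ((k:ℝ) * R) * f v ≤ 0 :=
      mul_nonpos_of_nonneg_of_nonpos (by positivity) hv
    have h4 : s * f x₀ ≤ s * |f x₀| :=
      mul_le_mul_of_nonneg_left (le_abs_self _) hs0.le
    have h5 : M * r + s * |f x₀| ≤ 1 := by
      have hMε : 0 ≤ M * ε := by positivity
      have heq : M * r + s * |f x₀| = (M * ε / 2 + |f x₀|) / D := by
        rw [hr, hs]; field_simp
      rw [heq, div_le_one hD0, hD]
      linarith
    linarith
  -- disjoint balls
  have hdisj : Pairwise (Function.onFun Disjoint (fun k : ℕ => ball (c k) r)) := by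
    intro j k hjk
    apply ball_disjoint_ball
    rw [dist_eq_norm]
    have hdiff : c j - c k = (((j:ℝ) - k) * R) • v := by
      simp only [hc]; module
    rw [hdiff, norm_smul, Real.norm_eq_abs, abs_mul, abs_of_pos hR0]
    have hjk1 : (1:ℝ) ≤ |(j:ℝ) - k| := by
      have hne : ((j:ℤ) - (k:ℤ)) ≠ 0 := sub_ne_zero.mpr (by exact_mod_cast hjk)
      have h2 : (1:ℝ) ≤ ((|(j:ℤ) - (k:ℤ)| : ℤ) : ℝ) := by
        exact_mod_cast Int.one_le_abs hne
      rwa [Int.cast_abs, Int.cast_sub, Int.cast_natCast, Int.cast_natCast] at h2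
    calc r + r = s * ε := by rw [hr]; ring
      _ ≤ 2 * s * ε := by nlinarith
      _ = 1 * R * ‖v‖ := by rw [hRdef, one_mul, div_mul_cancel₀ _ hvnorm.ne']
      _ ≤ |(j:ℝ) - k| * R * ‖v‖ := by
          apply mul_le_mul_of_nonneg_right _ hvnorm.le
          exact mul_le_mul_of_nonneg_right hjk1 hR0.le
      _ = |(j:ℝ) - k| * R * ‖v‖ := rfl
  -- conclude
  have hsub : (⋃ k : ℕ, ball (c k) r) ⊆ {x ∈ C | f x ≤ 1} := by
    apply Set.iUnion_subset
    intro k x hx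
    exact ⟨hmemC k hx, hfle k x hx⟩
  have hU : volume (⋃ k : ℕ, ball (c k) r) = ⊤ := by
    rw [measure_iUnion hdisj fun k => measurableSet_ball]
    have heach : ∀ k : ℕ, volume (ball (c k) r) = volume (ball (0 : Fin n → ℝ) r) :=
      fun k => Measure.addHaar_ball_center volume (c k) r
    rw [tsum_congr heach]
    exact ENNReal.tsum_const_eq_top_of_ne_zero
      (measure_ball_pos volume _ hr0).ne'
  exact top_le_iff.mp (hU ▸ measure_mono hsub)
end

section
/- Let C ⊆ ℝⁿ be a closed convex cone with nonempty interior and let f : ℝⁿ → ℝ be a linear functional. Then the Lebesgue measure of {x ∈ C : f(x) ≤ 1} is finite if and only if f(c) > 0 for every nonzero c ∈ C. -/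
open MeasureTheory Metric

set_option maxHeartbeats 1000000 in
/-- For a closed convex cone `C ⊆ ℝⁿ` with nonempty interior and a linear functional
`f`, the slice `{x ∈ C | f x ≤ 1}` has finite Lebesgue measure if and only if `f`
is positive on all nonzero points of `C`. -/
theorem slice_finite_volume_iff (n : ℕ) (C : Set (Fin n → ℝ))
    (hC_closed : IsClosed C) (hC_convex : Convex ℝ C)
    (hC_cone : ∀ t : ℝ, 0 ≤ t → ∀ x ∈ C, t • x ∈ C)
    (hC_int : (interior C).Nonempty)
    (f : (Fin n → ℝ) →ₗ[ℝ] ℝ) :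
    volume {x ∈ C | f x ≤ 1} < ⊤ ↔ ∀ c ∈ C, c ≠ 0 → 0 < f c := by
  classical
  have hf_cont : Continuous f := f.continuous_of_finiteDimensional
  set F := LinearMap.toContinuousLinearMap f with hF
  have hFf : ∀ x : (Fin n → ℝ), F x = f x := fun x => by rw [LinearMap.coe_toContinuousLinearMap']
  constructor
  · -- finite measure ⇒ positivity; by contradiction
    intro hfin
    by_contra h
    push_neg at h
    obtain ⟨c, hcC, hc0, hfc⟩ := h
    have hcnorm : 0 < ‖c‖ := norm_pos_iff.mpr hc0
    -- addition stability: C + ray(c) ⊆ C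
    have hadd : ∀ x ∈ C, ∀ s : ℝ, 0 ≤ s → x + s • c ∈ C := by
      intro x hx s hs
      have hsc : s • c ∈ C := hC_cone s hs c hcC
      have hmid : (1/2 : ℝ) • x + (1/2 : ℝ) • (s • c) ∈ C :=
        hC_convex hx hsc (by norm_num) (by norm_num) (by norm_num)
      have h2 := hC_cone 2 (by norm_num) _ hmid
      have : (2 : ℝ) • ((1/2 : ℝ) • x + (1/2 : ℝ) • (s • c)) = x + s • c := by
        rw [smul_add, smul_smul, smul_smul]; norm_num
      rwa [this] at h2
    -- find a small ball inside C on which f ≤ 1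
    obtain ⟨x₀, hx₀⟩ := hC_int
    obtain ⟨ε₀, hε₀, hball⟩ := Metric.isOpen_iff.mp isOpen_interior x₀ hx₀
    set M : ℝ := |f x₀| + ‖F‖ * ε₀ + 1 with hM_def
    have hM : 0 < M := by positivity
    set t : ℝ := M⁻¹ with ht_def
    have ht : 0 < t := by positivity
    set y : (Fin n → ℝ) := t • x₀ with hy_def
    set ε : ℝ := t * ε₀ with hε_def
    have hε : 0 < ε := by positivity
    have hball_sub : ball y ε ⊆ C := by
      intro w hw
      have hz : t⁻¹ • w ∈ ball x₀ ε₀ := by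
        rw [mem_ball] at hw ⊢
        have : t⁻¹ • w - x₀ = t⁻¹ • (w - y) := by
          rw [smul_sub, hy_def, smul_smul, inv_mul_cancel₀ ht.ne', one_smul]
        rw [dist_eq_norm, this, norm_smul, Real.norm_eq_abs, abs_of_pos (by positivity)]
        calc t⁻¹ * ‖w - y‖ < t⁻¹ * ε := by
              apply mul_lt_mul_of_pos_left _ (by positivity)
              rwa [dist_eq_norm] at hw
          _ = ε₀ := by rw [hε_def, ← mul_assoc, inv_mul_cancel₀ ht.ne', one_mul]
      have hzC : t⁻¹ • w ∈ C := interior_subset (hball hz)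
      have := hC_cone t ht.le _ hzC
      rwa [smul_smul, mul_inv_cancel₀ ht.ne', one_smul] at this
    have hball_f : ∀ w ∈ ball y ε, f w ≤ 1 := by
      intro w hw
      have h1 : f w - f y = f (w - y) := by rw [map_sub]
      have h2 : |f (w - y)| ≤ ‖F‖ * ε := by
        calc |f (w - y)| = ‖F (w - y)‖ := by rw [hFf, Real.norm_eq_abs]
          _ ≤ ‖F‖ * ‖w - y‖ := F.le_opNorm _
          _ ≤ ‖F‖ * ε := by
              apply mul_le_mul_of_nonneg_left _ (norm_nonneg F)
              rw [mem_ball, dist_eq_norm] at hw; exact hw.le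
      have h3 : f y = t * f x₀ := by rw [hy_def, LinearMap.map_smul, smul_eq_mul]
      have h4 : f w ≤ t * f x₀ + ‖F‖ * ε := by
        have := (abs_le.mp h2).2
        linarith [h1 ▸ this, h3]
      have h5 : t * f x₀ + ‖F‖ * ε ≤ t * (M - 1) := by
        rw [hε_def, hM_def]
        have : f x₀ ≤ |f x₀| := le_abs_self _
        nlinarith [ht.le, norm_nonneg F, hε₀.le]
      have h6 : t * (M - 1) < 1 := by
        rw [ht_def]
        have : M⁻¹ * M = 1 := inv_mul_cancel₀ hM.ne'
        nlinarith
      linarith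
    -- infinitely many disjoint translated balls inside the slice
    set T : ℝ := (2 * ε + 1) / ‖c‖ with hT_def
    have hT : 0 < T := by positivity
    set g : ℕ → Set (Fin n → ℝ) := fun k => ball (y + ((k : ℝ) * T) • c) ε with hg_def
    have hg_sub : ∀ k, g k ⊆ {x ∈ C | f x ≤ 1} := by
      intro k w hw
      have hv : w - ((k : ℝ) * T) • c ∈ ball y ε := by
        rw [mem_ball, dist_eq_norm] at hw ⊢
        have : w - ((k : ℝ) * T) • c - y = w - (y + ((k : ℝ) * T) • c) := by abel
        rwa [this]
      have hvC : w - ((k : ℝ) * T) • c ∈ C := hball_sub hv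
      have hkT : (0 : ℝ) ≤ (k : ℝ) * T := by positivity
      have hwC : w ∈ C := by
        have := hadd _ hvC _ hkT
        rwa [sub_add_cancel] at this
      refine ⟨hwC, ?_⟩
      have hfv : f (w - ((k : ℝ) * T) • c) ≤ 1 := hball_f _ hv
      rw [map_sub, LinearMap.map_smul, smul_eq_mul] at hfv
      nlinarith [hkT]
    have hg_disj : Pairwise (Function.onFun Disjoint g) := by
      intro j k hjk
      apply ball_disjoint_ball
      rw [dist_eq_norm]
      have : y + ((j : ℝ) * T) • c - (y + ((k : ℝ) * T) • c) = (((j : ℝ) - k) * T) • c := by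
        rw [sub_mul, sub_smul]; abel
      rw [this, norm_smul, Real.norm_eq_abs, abs_mul, abs_of_pos hT]
      have h1 : (1 : ℝ) ≤ |(j : ℝ) - (k : ℝ)| := by
        have hjk' : (j : ℤ) ≠ (k : ℤ) := by exact_mod_cast hjk
        have hint : (1 : ℤ) ≤ |(j : ℤ) - (k : ℤ)| := Int.one_le_abs (sub_ne_zero.mpr hjk')
        have hreal := (@Int.cast_le ℝ _ _ _).mpr hint
        push_cast at hreal
        simpa using hreal
      have : T * ‖c‖ = 2 * ε + 1 := by
        rw [hT_def, div_mul_cancel₀ _ hcnorm.ne']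
      nlinarith [hcnorm, mul_le_mul_of_nonneg_right h1 (by positivity : (0:ℝ) ≤ T * ‖c‖)]
    have htop : volume {x ∈ C | f x ≤ 1} = ⊤ := by
      have hsub : (⋃ k, g k) ⊆ {x ∈ C | f x ≤ 1} := Set.iUnion_subset hg_sub
      have hmeas : volume (⋃ k, g k) = ∑' k, volume (g k) :=
        measure_iUnion hg_disj fun k => measurableSet_ball
      have hgvol : ∀ k, volume (g k) = volume (ball (0 : (Fin n → ℝ)) ε) := fun k =>
        Measure.addHaar_ball_center volume _ _
      have hne : volume (ball (0 : (Fin n → ℝ)) ε) ≠ 0 := (measure_ball_pos volume 0 hε).ne'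
      have : volume (⋃ k, g k) = ⊤ := by
        rw [hmeas]
        simp only [hgvol]
        exact ENNReal.tsum_const_eq_top_of_ne_zero hne
      exact top_le_iff.mp (this ▸ measure_mono hsub)
    rw [htop] at hfin
    exact absurd hfin (lt_irrefl _)
  · -- positivity ⇒ finite measure: the slice is compact (or contained in a compact)
    intro hpos
    set S := {x ∈ C | f x ≤ 1} with hS
    have hS_closed : IsClosed S := by
      have : S = C ∩ f ⁻¹' (Set.Iic 1) := rfl
      rw [this]
      exact hC_closed.inter (isClosed_Iic.preimage hf_cont)
    set K := C ∩ sphere (0 : (Fin n → ℝ)) 1 with hK_def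
    by_cases hKne : K.Nonempty
    · have hK_compact : IsCompact K := (isCompact_sphere (0 : (Fin n → ℝ)) 1).inter_left hC_closed
      obtain ⟨z, hzK, hz_min⟩ := hK_compact.exists_isMinOn hKne hf_cont.continuousOn
      have hz_ne : z ≠ 0 := by
        intro h
        have := hzK.2
        rw [h, mem_sphere, dist_self] at this
        norm_num at this
      have hm : 0 < f z := hpos z hzK.1 hz_ne
      have hS_sub : S ⊆ closedBall (0 : (Fin n → ℝ)) (f z)⁻¹ := by
        intro x hx
        rcases eq_or_ne x 0 with rfl | hx0
        · simp [mem_closedBall]; positivity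
        · have hxn : 0 < ‖x‖ := norm_pos_iff.mpr hx0
          have hu : ‖x‖⁻¹ • x ∈ K := by
            refine ⟨hC_cone _ (by positivity) x hx.1, ?_⟩
            rw [mem_sphere, dist_zero_right, norm_smul, Real.norm_eq_abs,
              abs_of_pos (by positivity), inv_mul_cancel₀ hxn.ne']
          have hfu : f (‖x‖⁻¹ • x) = ‖x‖⁻¹ * f x := by rw [LinearMap.map_smul, smul_eq_mul]
          rw [mem_closedBall, dist_zero_right]
          have hmin : f z ≤ f (‖x‖⁻¹ • x) := hz_min hu
          rw [hfu] at hmin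
          have h1 : f z * ‖x‖ ≤ f x := by
            have := mul_le_mul_of_nonneg_left hmin hxn.le
            rwa [← mul_assoc, mul_inv_cancel₀ hxn.ne', one_mul, mul_comm] at this
          have h2 : f z * ‖x‖ ≤ 1 := h1.trans hx.2
          nlinarith [inv_pos.mpr hm, inv_mul_cancel₀ hm.ne']
      have hS_bdd : Bornology.IsBounded S :=
        (Metric.isBounded_closedBall).subset hS_sub
      have hS_compact : IsCompact S :=
        Metric.isCompact_of_isClosed_isBounded hS_closed hS_bdd
      exact hS_compact.measure_lt_top
    · have hsub : S ⊆ {0} := by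
        intro x hx
        by_contra hx0
        have hxn : 0 < ‖x‖ := norm_pos_iff.mpr (by simpa using hx0)
        exact hKne ⟨‖x‖⁻¹ • x, hC_cone _ (by positivity) x hx.1, by
          rw [mem_sphere, dist_zero_right, norm_smul, Real.norm_eq_abs,
            abs_of_pos (by positivity), inv_mul_cancel₀ hxn.ne']⟩
      exact lt_of_le_of_lt (measure_mono hsub) isCompact_singleton.measure_lt_top
end

section
/- For every integer r ≥ 0, the Lebesgue measure in ℝ^{1+r} of the set { (a, b₁, …, b_r) : bᵢ ≥ 0 for all 1 ≤ i ≤ r, b₁ + ⋯ + b_r ≤ a, and 3a − (b₁ + ⋯ + b_r) ≤ 1 } equals (1/2)^r · 1/(r+1)! · 1/3. -/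
open MeasureTheory ENNReal

lemma nefvol_measSet (n : ℕ) : MeasurableSet {x : Fin n → ℝ | ∀ i, 0 ≤ x i} := by
  rw [Set.setOf_forall]
  exact MeasurableSet.iInter fun i => measurableSet_le measurable_const (measurable_pi_apply i)

lemma nefvol_key (k : ℕ) (s : ℝ) :
    ∫⁻ t in Set.Ici (0:ℝ), (ENNReal.ofReal (s - 2*t))^(k+1)
      = ENNReal.ofReal s ^ (k+2) * ENNReal.ofReal (1/(2*((k:ℝ)+2))) := by
  rcases le_or_gt s 0 with hs | hs
  · rw [setLIntegral_congr_fun measurableSet_Ici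
      (fun t (ht : t ∈ Set.Ici (0:ℝ)) => by
        have : s - 2*t ≤ 0 := by simp only [Set.mem_Ici] at ht; linarith
        show (ENNReal.ofReal (s - 2*t))^(k+1) = (fun _ => (0:ℝ≥0∞)) t
        simp [ENNReal.ofReal_of_nonpos this])]
    simp [ENNReal.ofReal_of_nonpos hs]
  · have hs2 : (0:ℝ) ≤ s/2 := by linarith
    have hsplit : Set.Ici (0:ℝ) = Set.Icc 0 (s/2) ∪ Set.Ioi (s/2) :=
      (Set.Icc_union_Ioi_eq_Ici hs2).symm
    rw [hsplit, lintegral_union measurableSet_Ioi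
      ((Set.Iic_disjoint_Ioi le_rfl).mono_left Set.Icc_subset_Iic_self)]
    have hzero : ∫⁻ t in Set.Ioi (s/2), (ENNReal.ofReal (s - 2*t))^(k+1) = 0 := by
      rw [setLIntegral_congr_fun measurableSet_Ioi
        (fun t (ht : t ∈ Set.Ioi (s/2)) => by
          have : s - 2*t ≤ 0 := by simp only [Set.mem_Ioi] at ht; linarith
          show (ENNReal.ofReal (s - 2*t))^(k+1) = (fun _ => (0:ℝ≥0∞)) t
          simp [ENNReal.ofReal_of_nonpos this])]
      simp
    rw [hzero, add_zero]
    rw [setLIntegral_congr_fun measurableSet_Icc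
      (fun t (ht : t ∈ Set.Icc 0 (s/2)) => by
        have h1 : 0 ≤ s - 2*t := by
          obtain ⟨_, h2⟩ := ht; linarith
        show (ENNReal.ofReal (s - 2*t))^(k+1) = (fun t => ENNReal.ofReal ((s - 2*t)^(k+1))) t
        exact (ENNReal.ofReal_pow h1 (k+1)).symm)]
    have hint : IntegrableOn (fun t : ℝ => (s - 2*t)^(k+1)) (Set.Icc 0 (s/2)) := by
      apply Continuous.integrableOn_Icc
      fun_prop
    have hnn : 0 ≤ᵐ[volume.restrict (Set.Icc 0 (s/2))] fun t : ℝ => (s - 2*t)^(k+1) := by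
      filter_upwards [ae_restrict_mem measurableSet_Icc] with t ht
      have : 0 ≤ s - 2*t := by obtain ⟨_, h2⟩ := ht; linarith
      positivity
    rw [← ofReal_integral_eq_lintegral_ofReal hint hnn]
    have hreal : ∫ t in Set.Icc (0:ℝ) (s/2), (s - 2*t)^(k+1)
        = 2⁻¹ * (s^(k+2)/((k:ℝ)+2)) := by
      rw [MeasureTheory.integral_Icc_eq_integral_Ioc,
        ← intervalIntegral.integral_of_le hs2,
        intervalIntegral.integral_comp_sub_mul (fun x : ℝ => x^(k+1)) two_ne_zero s]
      have h1 : s - 2*(s/2) = 0 := by ring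
      have h2 : s - 2*0 = s := by ring
      rw [h1, h2, integral_pow]
      have : ((k:ℝ)+1+1) = (k:ℝ)+2 := by ring
      push_cast
      rw [smul_eq_mul]
      ring
    rw [hreal]
    have hnn2 : (0:ℝ) ≤ s^(k+2) := by positivity
    rw [← ENNReal.ofReal_pow hs.le, ← ENNReal.ofReal_mul hnn2]
    congr 1
    field_simp

lemma nefvol_F (n : ℕ) : ∀ s : ℝ,
    ∫⁻ x : Fin n → ℝ, Set.indicator {x : Fin n → ℝ | ∀ i, 0 ≤ x i}
      (fun x => ENNReal.ofReal (s - 2 * ∑ i, x i)) x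
    = ENNReal.ofReal s ^ (n+1)
        * ENNReal.ofReal ((1/2)^n * (1/(Nat.factorial (n+1) : ℝ))) := by
  induction n with
  | zero =>
    intro s
    have huniv : {x : Fin 0 → ℝ | ∀ i, 0 ≤ x i} = Set.univ := by
      ext x; simp
    rw [huniv, Set.indicator_univ]
    simp [lintegral_const, volume_pi, Measure.pi_univ, Nat.factorial]
  | succ n IH =>
    intro s
    set C := ENNReal.ofReal ((1/2)^n * (1/(Nat.factorial (n+1) : ℝ))) with hC
    set G : ℝ × (Fin n → ℝ) → ℝ≥0∞ := fun p =>
      Set.indicator {p : ℝ × (Fin n → ℝ) | 0 ≤ p.1 ∧ ∀ i, 0 ≤ p.2 i}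
        (fun p => ENNReal.ofReal (s - 2 * (p.1 + ∑ i, p.2 i))) p with hG
    have hGmeas : Measurable G := by
      apply Measurable.indicator
      · fun_prop
      · have hset : {p : ℝ × (Fin n → ℝ) | 0 ≤ p.1 ∧ ∀ i, 0 ≤ p.2 i}
            = {p : ℝ × (Fin n → ℝ) | 0 ≤ p.1} ∩ ⋂ i, {p : ℝ × (Fin n → ℝ) | 0 ≤ p.2 i} := by
          ext p; simp [Set.mem_iInter]
        rw [hset]
        exact (measurableSet_le measurable_const measurable_fst).inter
          (MeasurableSet.iInter fun i => measurableSet_le measurable_const (by fun_prop))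
    have step1 : ∫⁻ x : Fin (n+1) → ℝ, Set.indicator {x : Fin (n+1) → ℝ | ∀ i, 0 ≤ x i}
        (fun x => ENNReal.ofReal (s - 2 * ∑ i, x i)) x
        = ∫⁻ p : ℝ × (Fin n → ℝ), G p := by
      have hmp := (measurePreserving_piFinSuccAbove
        (fun _ : Fin (n+1) => (volume : Measure ℝ)) 0)
      rw [Measure.volume_eq_prod, volume_pi, volume_pi]
      rw [← hmp.lintegral_comp hGmeas]
      refine lintegral_congr fun x => ?_
      simp only [hG, MeasurableEquiv.piFinSuccAbove_apply, Fin.insertNthEquiv_symm_apply,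
        Fin.removeNth, Fin.zero_succAbove, Set.indicator_apply, Set.mem_setOf_eq,
        Fin.sum_univ_succ, Fin.forall_fin_succ]
      rfl
    rw [step1, Measure.volume_eq_prod, lintegral_prod G hGmeas.aemeasurable]
    have hinner : ∀ t : ℝ, (∫⁻ y : Fin n → ℝ, G (t, y))
        = Set.indicator (Set.Ici (0:ℝ))
            (fun t => ENNReal.ofReal (s - 2*t) ^ (n+1) * C) t := by
      intro t
      by_cases ht : (0:ℝ) ≤ t
      · rw [Set.indicator_of_mem (Set.mem_Ici.mpr ht)]
        have heq : ∀ y : Fin n → ℝ, G (t, y)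
            = Set.indicator {y : Fin n → ℝ | ∀ i, 0 ≤ y i}
                (fun y => ENNReal.ofReal ((s - 2*t) - 2 * ∑ i, y i)) y := by
          intro y
          simp only [hG, Set.indicator_apply, Set.mem_setOf_eq, ht, true_and]
          rw [show s - 2 * (t + ∑ i, y i) = (s - 2*t) - 2 * ∑ i, y i from by ring]
        simp only [heq]
        exact IH (s - 2*t)
      · rw [Set.indicator_of_notMem (fun hmem => ht (Set.mem_Ici.mp hmem))]
        have heq : ∀ y : Fin n → ℝ, G (t, y) = 0 := by
          intro y
          apply Set.indicator_of_notMem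
          simp only [Set.mem_setOf_eq, not_and]
          intro h; exact absurd h ht
        simp only [heq, lintegral_zero]
    simp only [hinner]
    rw [lintegral_indicator measurableSet_Ici]
    rw [lintegral_mul_const _ (by fun_prop)]
    rw [nefvol_key n s]
    rw [mul_assoc]
    congr 1
    rw [hC, ← ENNReal.ofReal_mul (by positivity)]
    congr 1
    have hfac : (Nat.factorial (n+2) : ℝ) = ((n:ℝ)+2) * (Nat.factorial (n+1) : ℝ) := by
      rw [show n+2 = (n+1)+1 from rfl, Nat.factorial_succ]
      push_cast; ring
    have h1 : (Nat.factorial (n+1) : ℝ) ≠ 0 := by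
      exact_mod_cast (Nat.factorial_pos (n+1)).ne'
    have h2 : ((n:ℝ)+2) ≠ 0 := by positivity
    rw [hfac]
    field_simp
    ring

/-- The nef cone volume of the blow-up of `ℙ²` in `r` points on a line: the Lebesgue
measure in `ℝ^{1+r}` of `{(a, b) : bᵢ ≥ 0, Σbᵢ ≤ a, 3a − Σbᵢ ≤ 1}` equals
`(1/2)^r · 1/(r+1)! · 1/3`. -/
theorem nef_volume_points_on_line (r : ℕ) :
    volume {p : ℝ × (Fin r → ℝ) |
        (∀ i, 0 ≤ p.2 i) ∧ (∑ i, p.2 i) ≤ p.1 ∧ 3 * p.1 - (∑ i, p.2 i) ≤ 1} =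
      ENNReal.ofReal ((1 / 2) ^ r * (1 / (Nat.factorial (r + 1))) * (1 / 3)) := by
  set S : Set (ℝ × (Fin r → ℝ)) := {p : ℝ × (Fin r → ℝ) |
      (∀ i, 0 ≤ p.2 i) ∧ (∑ i, p.2 i) ≤ p.1 ∧ 3 * p.1 - (∑ i, p.2 i) ≤ 1} with hSdef
  have hsum : Measurable (fun p : ℝ × (Fin r → ℝ) => ∑ i, p.2 i) := by fun_prop
  have hS : MeasurableSet S := by
    rw [hSdef]
    have e1 : MeasurableSet {p : ℝ × (Fin r → ℝ) | ∀ i, 0 ≤ p.2 i} := by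
      rw [Set.setOf_forall]
      exact MeasurableSet.iInter fun i =>
        measurableSet_le measurable_const (by fun_prop)
    have e2 : MeasurableSet {p : ℝ × (Fin r → ℝ) | (∑ i, p.2 i) ≤ p.1} :=
      measurableSet_le hsum measurable_fst
    have e3 : MeasurableSet {p : ℝ × (Fin r → ℝ) | 3 * p.1 - (∑ i, p.2 i) ≤ 1} :=
      measurableSet_le (by fun_prop) measurable_const
    exact (e1.inter (e2.inter e3) : _)
  rw [Measure.volume_eq_prod, Measure.prod_apply_symm hS]
  have hslice : ∀ y : Fin r → ℝ, volume ((fun x => (x, y)) ⁻¹' S)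
      = ENNReal.ofReal (1/3) * Set.indicator {y : Fin r → ℝ | ∀ i, 0 ≤ y i}
          (fun y => ENNReal.ofReal (1 - 2 * ∑ i, y i)) y := by
    intro y
    by_cases h : ∀ i, 0 ≤ y i
    · have hmem : y ∈ {y : Fin r → ℝ | ∀ i, 0 ≤ y i} := h
      rw [Set.indicator_of_mem hmem]
      have hpre : ((fun x => (x, y)) ⁻¹' S) = Set.Icc (∑ i, y i) ((1 + ∑ i, y i)/3) := by
        ext a
        simp only [hSdef, Set.mem_preimage, Set.mem_setOf_eq, Set.mem_Icc]
        constructor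
        · rintro ⟨_, h1, h2⟩; exact ⟨h1, by linarith⟩
        · rintro ⟨h1, h2⟩; exact ⟨h, h1, by linarith⟩
      rw [hpre, Real.volume_Icc,
        show (1 + ∑ i, y i)/3 - ∑ i, y i = (1/3) * (1 - 2 * ∑ i, y i) from by ring,
        ENNReal.ofReal_mul (by norm_num)]
    · have hmem : y ∉ {y : Fin r → ℝ | ∀ i, 0 ≤ y i} := h
      rw [Set.indicator_of_notMem hmem, mul_zero]
      have hpre : ((fun x => (x, y)) ⁻¹' S) = ∅ := by
        ext a
        simp only [hSdef, Set.mem_preimage, Set.mem_setOf_eq, Set.mem_empty_iff_false,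
          iff_false, not_and]
        intro hh; exact absurd hh h
      rw [hpre, measure_empty]
  simp only [hslice]
  rw [lintegral_const_mul _ (by
    apply Measurable.indicator
    · fun_prop
    · exact nefvol_measSet r)]
  rw [nefvol_F r 1]
  rw [ENNReal.ofReal_one, one_pow, one_mul, ← ENNReal.ofReal_mul (by norm_num)]
  congr 1
  ring
end

section
/- For all integers 0 ≤ s ≤ r, the Lebesgue measure in ℝ^{1+r} of the set { (a, b₁, …, b_r) : bᵢ ≤ 0 for 1 ≤ i ≤ s, b_j ≥ 0 for s < j ≤ r, b_{s+1} + ⋯ + b_r ≤ a, and 3a − (b₁ + ⋯ + b_r) ≤ 1 } equals (1/2)^{r−s} · 1/(3 · (r+1)!). -/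
open MeasureTheory

lemma simplex_empty (n : ℕ) (c : ℝ) (hc : c < 0) :
    {x : Fin n → ℝ | (∀ i, 0 ≤ x i) ∧ ∑ i, x i ≤ c} = ∅ := by
  ext x
  simp only [Set.mem_setOf_eq, Set.mem_empty_iff_false, iff_false, not_and]
  intro hx hsum
  have : (0:ℝ) ≤ ∑ i, x i := Finset.sum_nonneg fun i _ => hx i
  linarith

lemma simplex_closed (n : ℕ) (c : ℝ) :
    IsClosed {x : Fin n → ℝ | (∀ i, 0 ≤ x i) ∧ ∑ i, x i ≤ c} := by
  have h1 : IsClosed {x : Fin n → ℝ | ∀ i, 0 ≤ x i} := by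
    have : {x : Fin n → ℝ | ∀ i, 0 ≤ x i} = ⋂ i, {x | 0 ≤ x i} :=
      by ext x; simp
    rw [this]
    exact isClosed_iInter fun i => isClosed_le continuous_const (continuous_apply i)
  have h2 : IsClosed {x : Fin n → ℝ | ∑ i, x i ≤ c} :=
    isClosed_le (continuous_finset_sum _ fun i _ => continuous_apply i) continuous_const
  exact h1.inter h2

lemma simplex_vol : ∀ (n : ℕ) (c : ℝ), 0 ≤ c →
    volume {x : Fin n → ℝ | (∀ i, 0 ≤ x i) ∧ ∑ i, x i ≤ c}
      = ENNReal.ofReal (c ^ n / n.factorial) := by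
  intro n
  induction n with
  | zero =>
    intro c hc
    have : {x : Fin 0 → ℝ | (∀ i, 0 ≤ x i) ∧ ∑ i, x i ≤ c} = Set.univ := by
      ext x; simp [Finset.univ_eq_empty, hc]
    rw [this]
    rw [MeasureTheory.volume_pi, Measure.pi_univ]
    simp [Nat.factorial]
  | succ n ih =>
    intro c hc
    have hmp := MeasureTheory.volume_preserving_piFinSuccAbove (fun _ : Fin (n+1) => ℝ) 0
    set T : Set (ℝ × (Fin n → ℝ)) :=
      {p | 0 ≤ p.1 ∧ (∀ i, 0 ≤ p.2 i) ∧ p.1 + ∑ i, p.2 i ≤ c} with hT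
    have hTm : MeasurableSet T := by
      have h1 : IsClosed {p : ℝ × (Fin n → ℝ) | 0 ≤ p.1} :=
        isClosed_le continuous_const continuous_fst
      have h2 : IsClosed {p : ℝ × (Fin n → ℝ) | ∀ i, 0 ≤ p.2 i} := by
        have : {p : ℝ × (Fin n → ℝ) | ∀ i, 0 ≤ p.2 i} = ⋂ i, {p | 0 ≤ p.2 i} := by
          ext p; simp
        rw [this]
        exact isClosed_iInter fun i =>
          isClosed_le continuous_const ((continuous_apply i).comp continuous_snd)
      have h3 : IsClosed {p : ℝ × (Fin n → ℝ) | p.1 + ∑ i, p.2 i ≤ c} := by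
        exact isClosed_le (continuous_fst.add
          (continuous_finset_sum _ fun i _ => (continuous_apply i).comp continuous_snd))
          continuous_const
      exact ((h1.inter h2).inter h3).measurableSet.congr (by ext p; simp [hT]; tauto)
    have hset : {x : Fin (n+1) → ℝ | (∀ i, 0 ≤ x i) ∧ ∑ i, x i ≤ c}
        = (MeasurableEquiv.piFinSuccAbove (fun _ : Fin (n+1) => ℝ) 0) ⁻¹' T := by
      have he : ∀ x : Fin (n+1) → ℝ,
          (MeasurableEquiv.piFinSuccAbove (fun _ : Fin (n+1) => ℝ) 0) x
            = (x 0, fun j => x j.succ) := by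
        intro x
        simp [MeasurableEquiv.piFinSuccAbove, Fin.insertNthEquiv]
        exact funext fun j => rfl
      ext x
      simp only [Set.mem_preimage, he, hT, Set.mem_setOf_eq, Fin.forall_fin_succ,
        Fin.sum_univ_succ]
      constructor
      · rintro ⟨⟨h0, hi⟩, hsum⟩; exact ⟨h0, hi, hsum⟩
      · rintro ⟨h0, hi, hsum⟩; exact ⟨⟨h0, hi⟩, hsum⟩
    rw [hset, hmp.measure_preimage hTm.nullMeasurableSet]
    rw [show (volume : Measure (ℝ × (Fin n → ℝ))) = (volume : Measure ℝ).prod volume from rfl,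
      Measure.prod_apply hTm]
    have hslice : ∀ a : ℝ, volume (Prod.mk a ⁻¹' T)
        = Set.indicator (Set.Icc 0 c) (fun a => ENNReal.ofReal ((c - a) ^ n / n.factorial)) a := by
      intro a
      by_cases ha : 0 ≤ a
      · have hpre : Prod.mk a ⁻¹' T = {x : Fin n → ℝ | (∀ i, 0 ≤ x i) ∧ ∑ i, x i ≤ c - a} := by
          ext x
          simp only [Set.mem_preimage, hT, Set.mem_setOf_eq, ha, true_and]
          constructor
          · rintro ⟨h1, h2⟩; exact ⟨h1, by linarith⟩
          · rintro ⟨h1, h2⟩; exact ⟨h1, by linarith⟩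
        rw [hpre]
        by_cases hac : a ≤ c
        · rw [ih (c - a) (by linarith), Set.indicator_of_mem (Set.mem_Icc.2 ⟨ha, hac⟩)]
        · rw [simplex_empty n (c - a) (by linarith), Set.indicator_of_notMem (by simp [hac])]
          simp
      · have hpre : Prod.mk a ⁻¹' T = ∅ := by
          ext x; simp only [Set.mem_preimage, hT, Set.mem_setOf_eq, Set.mem_empty_iff_false,
            iff_false, not_and]
          intro h; exact absurd h ha
        rw [hpre, Set.indicator_of_notMem (by simp [ha])]
        simp
    rw [lintegral_congr hslice, lintegral_indicator measurableSet_Icc _]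
    have hfnn : 0 ≤ᵐ[volume.restrict (Set.Icc 0 c)]
        fun a => (c - a) ^ n / n.factorial := by
      refine (ae_restrict_iff' measurableSet_Icc).2 (ae_of_all _ fun a ha => ?_)
      have : (0:ℝ) ≤ (c - a) ^ n := pow_nonneg (by linarith [ha.2]) n
      positivity
    have hint : IntegrableOn (fun a => (c - a) ^ n / n.factorial) (Set.Icc 0 c) volume := by
      apply Continuous.integrableOn_Icc
      continuity
    rw [← MeasureTheory.ofReal_integral_eq_lintegral_ofReal hint hfnn]
    congr 1
    have h1 : ∫ a in Set.Icc 0 c, (c - a) ^ n / n.factorial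
        = ∫ a in (0:ℝ)..c, (c - a) ^ n / n.factorial := by
      rw [MeasureTheory.integral_Icc_eq_integral_Ioc, intervalIntegral.integral_of_le hc]
    rw [h1]
    have h2 : ∫ a in (0:ℝ)..c, (c - a) ^ n / n.factorial
        = (∫ a in (0:ℝ)..c, (c - a) ^ n) / n.factorial := intervalIntegral.integral_div _ _
    rw [h2]
    have h3 : (∫ a in (0:ℝ)..c, (c - a) ^ n) = ∫ a in (c - c)..(c - 0), a ^ n :=
      intervalIntegral.integral_comp_sub_left (fun x => x ^ n) c
    rw [h3]
    simp only [sub_self, sub_zero]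
    rw [integral_pow]
    have hfact : (Nat.factorial (n+1) : ℝ) = (n+1) * n.factorial := by
      rw [Nat.factorial_succ]; push_cast; ring
    rw [hfact]
    have hn1 : ((n:ℝ)+1) ≠ 0 := by positivity
    have hnf : (n.factorial : ℝ) ≠ 0 := Nat.cast_ne_zero.2 n.factorial_ne_zero
    field_simp
    simp


lemma card_filter_lt (r s : ℕ) (hs : s ≤ r) :
    (Finset.univ.filter (fun i : Fin r => (i : ℕ) < s)).card = s := by
  have : (Finset.univ.filter (fun i : Fin r => (i : ℕ) < s))
      = (Finset.range s).attachFin (fun m hm => lt_of_lt_of_le (Finset.mem_range.1 hm) hs) := by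
    ext i
    simp [Finset.mem_attachFin]
  rw [this, Finset.card_attachFin, Finset.card_range]

lemma card_filter_not_lt (r s : ℕ) (hs : s ≤ r) :
    (Finset.univ.filter (fun i : Fin r => ¬ (i : ℕ) < s)).card = r - s := by
  rw [Finset.filter_not, Finset.card_sdiff_of_subset (Finset.filter_subset _ _),
    card_filter_lt r s hs]
  simp

/-- Zariski chamber volumes on the blow-up of `ℙ²` in `r` points on a line: for the
chamber supported on the first `s` exceptional curves, the Lebesgue measure in
`ℝ^{1+r}` of `{(a, b) : bᵢ ≤ 0 for i ≤ s, b_j ≥ 0 for j > s, Σ_{j>s} b_j ≤ a,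
3a − Σbᵢ ≤ 1}` equals `(1/2)^{r−s} · 1/(3·(r+1)!)`. -/
theorem chamber_volume_points_on_line (r s : ℕ) (hs : s ≤ r) :
    volume {p : ℝ × (Fin r → ℝ) |
        (∀ i : Fin r, (i : ℕ) < s → p.2 i ≤ 0) ∧
        (∀ i : Fin r, s ≤ (i : ℕ) → 0 ≤ p.2 i) ∧
        (∑ i ∈ Finset.univ.filter (fun i : Fin r => s ≤ (i : ℕ)), p.2 i) ≤ p.1 ∧
        3 * p.1 - (∑ i, p.2 i) ≤ 1} =
      ENNReal.ofReal ((1 / 2) ^ (r - s) * (1 / (3 * Nat.factorial (r + 1)))) := by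
  classical
  set S : Set (ℝ × (Fin r → ℝ)) := {p : ℝ × (Fin r → ℝ) |
        (∀ i : Fin r, (i : ℕ) < s → p.2 i ≤ 0) ∧
        (∀ i : Fin r, s ≤ (i : ℕ) → 0 ≤ p.2 i) ∧
        (∑ i ∈ Finset.univ.filter (fun i : Fin r => s ≤ (i : ℕ)), p.2 i) ≤ p.1 ∧
        3 * p.1 - (∑ i, p.2 i) ≤ 1} with hS
  -- the diagonal entries
  set d : Fin r → ℝ := fun i => if (i : ℕ) < s then (-1 : ℝ) else 2 with hd
  -- the matrix
  set M : Matrix (Fin (r+1)) (Fin (r+1)) ℝ :=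
    Fin.cases (Fin.cons 3 (fun j => if s ≤ (j : ℕ) then (-3 : ℝ) else 0))
      (fun i => Fin.cons 0 (fun j => if j = i then d i else 0)) with hM
  set Ψ : (Fin (r+1) → ℝ) →ₗ[ℝ] (Fin (r+1) → ℝ) := Matrix.toLin' M with hΨ
  set Δ : Set (Fin (r+1) → ℝ) :=
    {x : Fin (r+1) → ℝ | (∀ i, 0 ≤ x i) ∧ ∑ i, x i ≤ 1} with hΔ
  -- apply formulas
  have happ0 : ∀ y : Fin (r+1) → ℝ,
      Ψ y 0 = 3 * y 0 - 3 * ∑ j ∈ Finset.univ.filter (fun j : Fin r => s ≤ (j : ℕ)), y j.succ := by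
    intro y
    rw [hΨ, Matrix.toLin'_apply]
    show ∑ j, M 0 j * y j = _
    rw [Fin.sum_univ_succ]
    have h0 : M 0 0 = 3 := by simp [hM]
    have hsucc : ∀ j : Fin r, M 0 j.succ = if s ≤ (j : ℕ) then (-3 : ℝ) else 0 := by
      intro j; simp [hM]
    rw [h0]
    simp only [hsucc, ite_mul, zero_mul]
    rw [← Finset.sum_filter]
    rw [← Finset.mul_sum]
    ring
  have happs : ∀ (y : Fin (r+1) → ℝ) (i : Fin r), Ψ y i.succ = d i * y i.succ := by
    intro y i
    rw [hΨ, Matrix.toLin'_apply]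
    show ∑ j, M i.succ j * y j = _
    rw [Fin.sum_univ_succ]
    have h0 : M i.succ 0 = 0 := by simp [hM]
    have hsucc : ∀ j : Fin r, M i.succ j.succ = if j = i then d i else 0 := by
      intro j; simp [hM]
    rw [h0]
    simp only [hsucc, ite_mul, zero_mul]
    rw [Finset.sum_ite_eq' Finset.univ i (fun j => d i * y j.succ)]
    simp
  -- measure preserving equivalence
  have hmp := MeasureTheory.volume_preserving_piFinSuccAbove (fun _ : Fin (r+1) => ℝ) 0
  have he : ∀ y : Fin (r+1) → ℝ,
      (MeasurableEquiv.piFinSuccAbove (fun _ : Fin (r+1) => ℝ) 0) y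
        = (y 0, fun j => y j.succ) := by
    intro y
    simp [MeasurableEquiv.piFinSuccAbove, Fin.insertNthEquiv]
    exact funext fun j => rfl
  -- S is measurable
  have hSm : MeasurableSet S := by
    have h1 : IsClosed {p : ℝ × (Fin r → ℝ) | ∀ i : Fin r, (i : ℕ) < s → p.2 i ≤ 0} := by
      have : {p : ℝ × (Fin r → ℝ) | ∀ i : Fin r, (i : ℕ) < s → p.2 i ≤ 0}
          = ⋂ i : Fin r, {p | (i : ℕ) < s → p.2 i ≤ 0} := by ext p; simp
      rw [this]
      refine isClosed_iInter fun i => ?_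
      by_cases h : (i : ℕ) < s
      · simp only [h, true_implies]
        exact isClosed_le ((continuous_apply i).comp continuous_snd) continuous_const
      · simp only [h, false_implies, Set.setOf_true]
        exact isClosed_univ
    have h2 : IsClosed {p : ℝ × (Fin r → ℝ) | ∀ i : Fin r, s ≤ (i : ℕ) → 0 ≤ p.2 i} := by
      have : {p : ℝ × (Fin r → ℝ) | ∀ i : Fin r, s ≤ (i : ℕ) → 0 ≤ p.2 i}
          = ⋂ i : Fin r, {p | s ≤ (i : ℕ) → 0 ≤ p.2 i} := by ext p; simp
      rw [this]
      refine isClosed_iInter fun i => ?_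
      by_cases h : s ≤ (i : ℕ)
      · simp only [h, true_implies]
        exact isClosed_le continuous_const ((continuous_apply i).comp continuous_snd)
      · simp only [h, false_implies, Set.setOf_true]
        exact isClosed_univ
    have h3 : IsClosed {p : ℝ × (Fin r → ℝ) |
        (∑ i ∈ Finset.univ.filter (fun i : Fin r => s ≤ (i : ℕ)), p.2 i) ≤ p.1} :=
      isClosed_le (continuous_finset_sum _ fun i _ => (continuous_apply i).comp continuous_snd)
        continuous_fst
    have h4 : IsClosed {p : ℝ × (Fin r → ℝ) | 3 * p.1 - (∑ i, p.2 i) ≤ 1} :=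
      isClosed_le (((continuous_const.mul continuous_fst).sub
        (continuous_finset_sum _ fun i _ => (continuous_apply i).comp continuous_snd)))
        continuous_const
    have : S = ({p : ℝ × (Fin r → ℝ) | ∀ i : Fin r, (i : ℕ) < s → p.2 i ≤ 0}
        ∩ {p | ∀ i : Fin r, s ≤ (i : ℕ) → 0 ≤ p.2 i})
        ∩ ({p : ℝ × (Fin r → ℝ) |
            (∑ i ∈ Finset.univ.filter (fun i : Fin r => s ≤ (i : ℕ)), p.2 i) ≤ p.1}
          ∩ {p | 3 * p.1 - (∑ i, p.2 i) ≤ 1}) := by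
      ext p; simp only [hS, Set.mem_setOf_eq, Set.mem_inter_iff]; tauto
    rw [this]
    exact (((h1.inter h2).inter (h3.inter h4))).measurableSet
  -- main set identification
  have hset : (MeasurableEquiv.piFinSuccAbove (fun _ : Fin (r+1) => ℝ) 0) ⁻¹' S
      = Ψ ⁻¹' Δ := by
    ext y
    simp only [Set.mem_preimage, he, hS, Set.mem_setOf_eq, hΔ]
    have hsum3 : ∑ k, Ψ y k = Ψ y 0 + ∑ i : Fin r, Ψ y i.succ := Fin.sum_univ_succ _
    have hf2 : ∑ i : Fin r, d i * y i.succ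
        = (∑ i ∈ Finset.univ.filter (fun i : Fin r => (i : ℕ) < s), (-1) * y i.succ)
          + ∑ i ∈ Finset.univ.filter (fun i : Fin r => ¬ (i : ℕ) < s), 2 * y i.succ := by
      rw [← Finset.sum_filter_add_sum_filter_not Finset.univ (fun i : Fin r => (i : ℕ) < s)]
      congr 1
      · refine Finset.sum_congr rfl fun i hi => ?_
        rw [hd]; simp only [Finset.mem_filter] at hi; simp [hi.2]
      · refine Finset.sum_congr rfl fun i hi => ?_
        rw [hd]; simp only [Finset.mem_filter] at hi; simp [hi.2]
    have hfilt : Finset.univ.filter (fun i : Fin r => ¬ (i : ℕ) < s)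
        = Finset.univ.filter (fun i : Fin r => s ≤ (i : ℕ)) := by
      apply Finset.filter_congr; intro i _; simp [not_lt]
    have hall : ∑ i : Fin r, y i.succ
        = (∑ i ∈ Finset.univ.filter (fun i : Fin r => (i : ℕ) < s), y i.succ)
          + ∑ i ∈ Finset.univ.filter (fun i : Fin r => s ≤ (i : ℕ)), y i.succ := by
      rw [← hfilt, Finset.sum_filter_add_sum_filter_not]
    constructor
    · rintro ⟨hA, hB, hC, hD⟩
      refine ⟨?_, ?_⟩
      · rw [Fin.forall_fin_succ]
        constructor
        · rw [happ0]; linarith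
        · intro i
          rw [happs]
          rw [hd]
          by_cases h : (i : ℕ) < s
          · simp only [h, if_true]
            have := hA i h
            nlinarith
          · simp only [h, if_false]
            have := hB i (not_lt.1 h)
            linarith
      · rw [hsum3, happ0]
        simp only [happs]
        rw [hf2, hfilt]
        have h1 : ∑ i ∈ Finset.univ.filter (fun i : Fin r => (i : ℕ) < s), (-1 : ℝ) * y i.succ
            = -(∑ i ∈ Finset.univ.filter (fun i : Fin r => (i : ℕ) < s), y i.succ) := by
          rw [← Finset.sum_neg_distrib]; exact Finset.sum_congr rfl fun i _ => by ring
        have h2 : ∑ i ∈ Finset.univ.filter (fun i : Fin r => s ≤ (i : ℕ)), (2 : ℝ) * y i.succ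
            = 2 * ∑ i ∈ Finset.univ.filter (fun i : Fin r => s ≤ (i : ℕ)), y i.succ := by
          rw [Finset.mul_sum]
        rw [h1, h2]
        have hD' := hD
        rw [hall] at hD'
        linarith
    · rintro ⟨hpos, hsum⟩
      rw [Fin.forall_fin_succ] at hpos
      obtain ⟨h0, hi⟩ := hpos
      rw [happ0] at h0
      have hA : ∀ i : Fin r, (i : ℕ) < s → y i.succ ≤ 0 := by
        intro i h
        have := hi i
        rw [happs, hd] at this
        simp only [h, if_true] at this
        linarith
      have hB : ∀ i : Fin r, s ≤ (i : ℕ) → 0 ≤ y i.succ := by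
        intro i h
        have := hi i
        rw [happs, hd] at this
        simp only [not_lt.2 h, if_false] at this
        linarith
      refine ⟨hA, hB, by linarith, ?_⟩
      rw [hsum3, happ0] at hsum
      simp only [happs] at hsum
      rw [hf2, hfilt] at hsum
      have h1 : ∑ i ∈ Finset.univ.filter (fun i : Fin r => (i : ℕ) < s), (-1 : ℝ) * y i.succ
          = -(∑ i ∈ Finset.univ.filter (fun i : Fin r => (i : ℕ) < s), y i.succ) := by
        rw [← Finset.sum_neg_distrib]; exact Finset.sum_congr rfl fun i _ => by ring
      have h2 : ∑ i ∈ Finset.univ.filter (fun i : Fin r => s ≤ (i : ℕ)), (2 : ℝ) * y i.succ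
          = 2 * ∑ i ∈ Finset.univ.filter (fun i : Fin r => s ≤ (i : ℕ)), y i.succ := by
        rw [Finset.mul_sum]
      rw [h1, h2] at hsum
      rw [hall]
      linarith
  -- determinant
  have hdet : LinearMap.det Ψ = 3 * ((-1 : ℝ) ^ s * 2 ^ (r - s)) := by
    rw [hΨ, LinearMap.det_toLin']
    have htri : M.BlockTriangular id := by
      intro i j hij
      simp only [id] at hij
      refine Fin.cases ?_ (fun i' => ?_) i hij
      · intro h; exact absurd h (Fin.not_lt_zero _).elim
      · intro h
        refine Fin.cases ?_ (fun j' => ?_) j h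
        · intro _; simp [hM]
        · intro hj
          have hne : j' ≠ i' := by
            intro hcon
            subst hcon
            exact lt_irrefl _ hj
          simp [hM, hne]
    rw [Matrix.det_of_upperTriangular htri]
    rw [Fin.prod_univ_succ]
    have h0 : M 0 0 = 3 := by simp [hM]
    have hsucc : ∀ i : Fin r, M i.succ i.succ = d i := by intro i; simp [hM]
    rw [h0]
    simp only [hsucc]
    congr 1
    rw [hd]
    rw [Finset.prod_ite _ _]
    rw [Finset.prod_const, Finset.prod_const, card_filter_lt r s hs,
      card_filter_not_lt r s hs]
  have hdetne : LinearMap.det Ψ ≠ 0 := by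
    rw [hdet]
    apply mul_ne_zero (by norm_num)
    apply mul_ne_zero (pow_ne_zero _ (by norm_num)) (pow_ne_zero _ (by norm_num))
  -- put everything together
  have hvol : volume S = volume ((MeasurableEquiv.piFinSuccAbove
      (fun _ : Fin (r+1) => ℝ) 0) ⁻¹' S) :=
    (hmp.measure_preimage hSm.nullMeasurableSet).symm
  rw [hvol, hset, MeasureTheory.Measure.addHaar_preimage_linearMap volume hdetne]
  rw [hΔ, simplex_vol (r+1) 1 zero_le_one]
  rw [← ENNReal.ofReal_mul (by positivity)]
  congr 1
  rw [hdet]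
  rw [abs_inv, abs_mul, abs_mul, abs_pow, abs_pow]
  simp only [abs_neg, abs_one, one_pow, one_mul]
  have h2 : |(2:ℝ)| = 2 := by norm_num
  have h3 : |(3:ℝ)| = 3 := by norm_num
  rw [h2, h3]
  have hfpos : (0:ℝ) < Nat.factorial (r+1) := by positivity
  have h2pos : (0:ℝ) < 2 ^ (r - s) := by positivity
  field_simp
  rw [← mul_pow]; norm_num
end

section
/- For every integer r ≥ 1, the Lebesgue measure in ℝ^{1+r} of the set { (a, b₁, …, b_r) : b₁ ≥ b₂ ≥ ⋯ ≥ b_r ≥ 0, b₁ + ⋯ + b_r ≤ a, and 3a − (b₁ + ⋯ + b_r) ≤ 1 } equals 1/(3 · 2^r · r! · (r+1)!). -/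
open MeasureTheory

section Aux
open Finset

def Mm (r : ℕ) : Matrix (Fin (r + 1)) (Fin (r + 1)) ℝ := fun i j =>
  if (i : ℕ) = 0 then (if (j : ℕ) = 0 then 3 else -3)
  else if (j : ℕ) = (i : ℕ) then 2 * (i : ℕ)
  else if (j : ℕ) = (i : ℕ) + 1 then -(2 * (i : ℕ)) else 0

def xe (r : ℕ) (x : Fin (r + 1) → ℝ) : ℕ → ℝ := fun k =>
  if h : k < r + 1 then x ⟨k, h⟩ else 0

lemma xe_succ (r : ℕ) (x : Fin (r + 1) → ℝ) (j : Fin r) :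
    xe r x ((j : ℕ) + 1) = x j.succ := by
  unfold xe
  rw [dif_pos (Nat.succ_lt_succ j.isLt)]
  rfl

lemma xe_zero (r : ℕ) (x : Fin (r + 1) → ℝ) {k : ℕ} (hk : r + 1 ≤ k) : xe r x k = 0 := by
  unfold xe; rw [dif_neg (by omega)]

lemma abel_sum (y : ℕ → ℝ) : ∀ n : ℕ, ∑ k ∈ range n, ((k : ℝ) + 1) * (y k - y (k + 1))
    = (∑ k ∈ range n, y k) - n * y n := by
  intro n
  induction n with
  | zero => simp
  | succ n ih => rw [sum_range_succ, ih, sum_range_succ]; push_cast; ring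

lemma mono_iff (r : ℕ) (x : Fin (r + 1) → ℝ) :
    ((∀ i j : Fin r, i ≤ j → x j.succ ≤ x i.succ) ∧ (∀ i : Fin r, 0 ≤ x i.succ))
      ↔ ∀ i : Fin r, xe r x ((i : ℕ) + 2) ≤ xe r x ((i : ℕ) + 1) := by
  constructor
  · rintro ⟨h1, h2⟩ i
    rw [xe_succ r x i]
    by_cases hk : (i : ℕ) + 1 < r
    · have hle : i ≤ (⟨(i : ℕ) + 1, hk⟩ : Fin r) := by
        rw [Fin.le_def]
        simp only [Fin.val_mk]
        omega
      have hx : xe r x ((i : ℕ) + 2) = x (Fin.succ ⟨(i : ℕ) + 1, hk⟩) :=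
        xe_succ r x ⟨(i : ℕ) + 1, hk⟩
      rw [hx]
      exact h1 i ⟨(i : ℕ) + 1, hk⟩ hle
    · rw [xe_zero r x (by omega)]
      exact h2 i
  · intro h
    have hadj : ∀ k : ℕ, xe r x (k + 1 + 1) ≤ xe r x (k + 1) := by
      intro k
      by_cases hk : k < r
      · exact h ⟨k, hk⟩
      · rw [xe_zero r x (by omega), xe_zero r x (by omega)]
    have hmono : Antitone (fun k : ℕ => xe r x (k + 1)) :=
      antitone_nat_of_succ_le hadj
    constructor
    · intro i j hij
      rw [← xe_succ r x i, ← xe_succ r x j]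
      exact hmono (show (i : ℕ) ≤ (j : ℕ) from hij)
    · intro i
      rw [← xe_succ r x i]
      have h0 := hmono (show (i : ℕ) ≤ r from le_of_lt i.isLt)
      have h0' : xe r x (r + 1) ≤ xe r x ((i : ℕ) + 1) := h0
      rwa [show xe r x (r + 1) = 0 from xe_zero r x le_rfl] at h0'

lemma abel2 (r : ℕ) (x : Fin (r + 1) → ℝ) :
    ∑ i : Fin r, 2 * (((i : ℕ) : ℝ) + 1) * (xe r x ((i : ℕ) + 1) - xe r x ((i : ℕ) + 2))
      = 2 * ∑ j : Fin r, x j.succ := by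
  have hterm : ∀ k : ℕ, (2 * ((k : ℝ) + 1) * (xe r x (k + 1) - xe r x (k + 2)) : ℝ)
      = 2 * (((k : ℝ) + 1) * (xe r x (k + 1) - xe r x (k + 1 + 1))) := by
    intro k
    have : k + 2 = k + 1 + 1 := rfl
    rw [this]; ring
  rw [Fin.sum_univ_eq_sum_range
    (fun k => 2 * ((k : ℝ) + 1) * (xe r x (k + 1) - xe r x (k + 2))) r]
  rw [Finset.sum_congr rfl (fun k _ => hterm k)]
  rw [← Finset.mul_sum, abel_sum (fun k => xe r x (k + 1)) r]
  rw [show xe r x (r + 1) = 0 from xe_zero r x le_rfl]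
  rw [show (∑ k ∈ range r, xe r x (k + 1)) = ∑ j : Fin r, x j.succ by
    rw [← Fin.sum_univ_eq_sum_range (fun k => xe r x (k + 1)) r]
    exact Finset.sum_congr rfl fun j _ => xe_succ r x j]
  ring

lemma Mm_det (r : ℕ) : (Mm r).det = 3 * 2 ^ r * (Nat.factorial r : ℝ) := by
  have htri : (Mm r).BlockTriangular id := by
    intro i j hij
    have hij' : (j : ℕ) < (i : ℕ) := hij
    unfold Mm
    rw [if_neg (by omega), if_neg (by omega), if_neg (by omega)]
  rw [Matrix.det_of_upperTriangular htri]
  rw [Fin.prod_univ_succ]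
  have h00 : Mm r 0 0 = 3 := by unfold Mm; simp
  have hii : ∀ i : Fin r, Mm r i.succ i.succ = 2 * ((i : ℕ) + 1 : ℝ) := by
    intro i
    unfold Mm
    rw [if_neg (by simp [Fin.val_succ]), if_pos rfl]
    simp [Fin.val_succ]
  rw [h00]
  simp only [hii]
  rw [Finset.prod_mul_distrib, Finset.prod_const, card_univ, Fintype.card_fin]
  have : ∏ i : Fin r, ((i : ℕ) + 1 : ℝ) = (Nat.factorial r : ℝ) := by
    rw [Fin.prod_univ_eq_prod_range (fun k => ((k : ℕ) + 1 : ℝ))]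
    norm_cast
    exact prod_range_add_one_eq_factorial r
  rw [this]
  ring

lemma row0 (r : ℕ) (x : Fin (r + 1) → ℝ) :
    Matrix.toLin' (Mm r) x 0 = 3 * x 0 - 3 * ∑ j : Fin r, x j.succ := by
  rw [Matrix.toLin'_apply]
  show ∑ j, Mm r 0 j * x j = _
  rw [Fin.sum_univ_succ]
  have h0 : Mm r 0 0 = 3 := by unfold Mm; simp
  have hs : ∀ j : Fin r, Mm r 0 j.succ = -3 := by
    intro j; unfold Mm; simp [Fin.val_succ]
  rw [h0]
  simp only [hs]
  rw [show ∑ j : Fin r, -3 * x j.succ = -(3 * ∑ j : Fin r, x j.succ) by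
    rw [← Finset.mul_sum]; ring]
  ring

lemma rowi (r : ℕ) (x : Fin (r + 1) → ℝ) (i : Fin r) :
    Matrix.toLin' (Mm r) x i.succ
      = 2 * ((i : ℕ) + 1) * (xe r x ((i : ℕ) + 1) - xe r x ((i : ℕ) + 2)) := by
  rw [Matrix.toLin'_apply]
  show ∑ j, Mm r i.succ j * x j = _
  set f : ℕ → ℝ := fun k => (if k = (i : ℕ) + 1 then 2 * ((i : ℕ) + 1 : ℝ)
        else if k = (i : ℕ) + 2 then -(2 * ((i : ℕ) + 1 : ℝ)) else 0) * xe r x k with hf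
  have hpt : ∀ j : Fin (r + 1), Mm r i.succ j * x j = f (j : ℕ) := by
    intro j
    have hxj : x j = xe r x (j : ℕ) := by
      unfold xe; rw [dif_pos j.isLt]
    unfold Mm
    rw [if_neg (by simp [Fin.val_succ]), hxj]
    simp [hf, Fin.val_succ]
  rw [Finset.sum_congr rfl fun j _ => hpt j, Fin.sum_univ_eq_sum_range f]
  have hsplit : ∀ k, f k
      = (if k = (i : ℕ) + 1 then 2 * ((i : ℕ) + 1 : ℝ) * xe r x k else 0)
        + (if k = (i : ℕ) + 2 then -(2 * ((i : ℕ) + 1 : ℝ)) * xe r x k else 0) := by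
    intro k
    by_cases h1 : k = (i : ℕ) + 1
    · simp only [hf, if_pos h1, if_neg (show ¬ k = (i:ℕ)+2 by omega)]; ring
    · by_cases h2 : k = (i : ℕ) + 2
      · simp only [hf, if_neg h1, if_pos h2]; ring
      · simp only [hf, if_neg h1, if_neg h2]; ring
  rw [Finset.sum_congr rfl fun k _ => hsplit k, Finset.sum_add_distrib,
    Finset.sum_ite_eq' (range (r + 1)) ((i : ℕ) + 1),
    Finset.sum_ite_eq' (range (r + 1)) ((i : ℕ) + 2)]
  rw [if_pos (by simp [Nat.succ_lt_succ i.isLt])]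
  by_cases h2 : (i : ℕ) + 2 ∈ range (r + 1)
  · rw [if_pos h2]; ring
  · rw [if_neg h2]
    have hz : xe r x ((i : ℕ) + 2) = 0 := by
      apply xe_zero
      rw [Finset.mem_range] at h2
      omega
    rw [hz]; ring

lemma simplex_measurable (n : ℕ) (c : ℝ) :
    MeasurableSet {x : Fin n → ℝ | (∀ i, 0 ≤ x i) ∧ ∑ i, x i ≤ c} := by
  refine MeasurableSet.inter ?_ ?_
  · show MeasurableSet {x : Fin n → ℝ | ∀ i, 0 ≤ x i}
    rw [Set.setOf_forall]
    exact MeasurableSet.iInter fun i =>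
      measurableSet_le measurable_const (measurable_pi_apply i)
  · exact measurableSet_le (Finset.measurable_sum _ fun i _ => measurable_pi_apply i)
      measurable_const

lemma simplex_volume : ∀ (n : ℕ) (c : ℝ), 0 ≤ c →
    volume {x : Fin n → ℝ | (∀ i, 0 ≤ x i) ∧ ∑ i, x i ≤ c}
      = ENNReal.ofReal (c ^ n / (Nat.factorial n)) := by
  intro n
  induction n with
  | zero =>
    intro c hc
    have : {x : Fin 0 → ℝ | (∀ i, 0 ≤ x i) ∧ ∑ i, x i ≤ c} = Set.univ := by
      ext x; simp [hc]
    rw [this, MeasureTheory.volume_pi, MeasureTheory.Measure.pi_univ]; simp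
  | succ n ih =>
    intro c hc
    have e := ((volume_preserving_piFinSuccAbove (fun _ : Fin (n + 1) => ℝ) 0).symm
      (MeasurableEquiv.piFinSuccAbove (fun _ : Fin (n + 1) => ℝ) 0))
    rw [← e.measure_preimage_equiv]
    have hB : ((MeasurableEquiv.piFinSuccAbove (fun _ : Fin (n + 1) => ℝ) 0).symm) ⁻¹'
        {x : Fin (n+1) → ℝ | (∀ i, 0 ≤ x i) ∧ ∑ i, x i ≤ c}
        = {p : ℝ × (Fin n → ℝ) | 0 ≤ p.1 ∧ (∀ i, 0 ≤ p.2 i) ∧ p.1 + ∑ i, p.2 i ≤ c} := by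
      ext ⟨a, z⟩
      simp only [Set.mem_preimage, Set.mem_setOf_eq, MeasurableEquiv.piFinSuccAbove_symm_apply,
        Fin.insertNthEquiv_zero, Fin.consEquiv_apply,
        Fin.forall_fin_succ, Fin.sum_univ_succ, Fin.cons_zero, Fin.cons_succ]
      tauto
    rw [hB]
    have hBm : MeasurableSet {p : ℝ × (Fin n → ℝ) | 0 ≤ p.1 ∧ (∀ i, 0 ≤ p.2 i) ∧ p.1 + ∑ i, p.2 i ≤ c} := by
      refine MeasurableSet.inter ?_ (MeasurableSet.inter ?_ ?_)
      · exact measurableSet_le measurable_const measurable_fst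
      · show MeasurableSet {p : ℝ × (Fin n → ℝ) | ∀ i, 0 ≤ p.2 i}
        rw [Set.setOf_forall]
        exact MeasurableSet.iInter fun i =>
          measurableSet_le measurable_const (measurable_pi_apply i |>.comp measurable_snd : Measurable fun p : ℝ × (Fin n → ℝ) => p.2 i)
      · exact measurableSet_le (measurable_fst.add
          (Finset.measurable_sum _ fun i _ => (measurable_pi_apply i |>.comp measurable_snd : Measurable fun p : ℝ × (Fin n → ℝ) => p.2 i)))
          measurable_const
    rw [Measure.volume_eq_prod, MeasureTheory.Measure.prod_apply hBm]
    have hslice : ∀ a : ℝ, (Prod.mk a ⁻¹' {p : ℝ × (Fin n → ℝ) | 0 ≤ p.1 ∧ (∀ i, 0 ≤ p.2 i) ∧ p.1 + ∑ i, p.2 i ≤ c})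
        = if a ∈ Set.Icc 0 c then {z : Fin n → ℝ | (∀ i, 0 ≤ z i) ∧ ∑ i, z i ≤ c - a} else ∅ := by
      intro a
      by_cases ha : a ∈ Set.Icc 0 c
      · rw [if_pos ha]
        ext z
        simp only [Set.mem_preimage, Set.mem_setOf_eq, ha.1, true_and]
        constructor
        · rintro ⟨h1, h2⟩; exact ⟨h1, by linarith⟩
        · rintro ⟨h1, h2⟩; exact ⟨h1, by linarith⟩
      · rw [if_neg ha]
        ext z
        simp only [Set.mem_preimage, Set.mem_setOf_eq, Set.mem_empty_iff_false, iff_false]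
        rintro ⟨h0, h1, h2⟩
        rw [Set.mem_Icc, not_and_or, not_le, not_le] at ha
        rcases ha with h | h
        · linarith
        · have : 0 ≤ ∑ i, z i := Finset.sum_nonneg fun i _ => h1 i
          linarith
    have hv : ∀ a : ℝ, volume (Prod.mk a ⁻¹' {p : ℝ × (Fin n → ℝ) | 0 ≤ p.1 ∧ (∀ i, 0 ≤ p.2 i) ∧ p.1 + ∑ i, p.2 i ≤ c})
        = Set.indicator (Set.Icc 0 c) (fun a => ENNReal.ofReal ((c - a) ^ n / (Nat.factorial n))) a := by
      intro a
      rw [hslice a]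
      by_cases ha : a ∈ Set.Icc 0 c
      · rw [if_pos ha, Set.indicator_of_mem ha, ih _ (by linarith [ha.2])]
      · rw [if_neg ha, Set.indicator_of_notMem ha, measure_empty]
    simp only [hv]
    rw [lintegral_indicator measurableSet_Icc]
    have hint : IntegrableOn (fun a : ℝ => (c - a) ^ n / (Nat.factorial n)) (Set.Icc 0 c) := by
      apply Continuous.integrableOn_Icc
      continuity
    rw [← MeasureTheory.ofReal_integral_eq_lintegral_ofReal hint]
    · congr 1
      rw [MeasureTheory.integral_Icc_eq_integral_Ioc, ← intervalIntegral.integral_of_le hc]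
      rw [intervalIntegral.integral_comp_sub_left (fun u : ℝ => u ^ n / (Nat.factorial n)) c]
      simp only [sub_self, sub_zero]
      rw [intervalIntegral.integral_div, integral_pow]
      rw [Nat.factorial_succ]
      push_cast
      field_simp
      rw [zero_pow (Nat.succ_ne_zero n), sub_zero]
    · filter_upwards [self_mem_ae_restrict (measurableSet_Icc : MeasurableSet (Set.Icc (0:ℝ) c))] with a ha
      have : 0 ≤ (c - a) ^ n := pow_nonneg (by linarith [ha.2]) n
      positivity


end Aux

/-- The nef cone volume of the blow-up of `ℙ²` in `r` infinitely near points along a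
line: the Lebesgue measure in `ℝ^{1+r}` of
`{(a, b) : b₁ ≥ … ≥ b_r ≥ 0, Σbᵢ ≤ a, 3a − Σbᵢ ≤ 1}` equals
`1/(3 · 2^r · r! · (r+1)!)`. -/
theorem nef_volume_infinitely_near (r : ℕ) (hr : 1 ≤ r) :
    volume {p : ℝ × (Fin r → ℝ) |
        (∀ i j : Fin r, i ≤ j → p.2 j ≤ p.2 i) ∧
        (∀ i, 0 ≤ p.2 i) ∧
        (∑ i, p.2 i) ≤ p.1 ∧ 3 * p.1 - (∑ i, p.2 i) ≤ 1} =
      ENNReal.ofReal (1 / (3 * 2 ^ r * Nat.factorial r * Nat.factorial (r + 1))) := by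
  set S := {p : ℝ × (Fin r → ℝ) |
        (∀ i j : Fin r, i ≤ j → p.2 j ≤ p.2 i) ∧
        (∀ i, 0 ≤ p.2 i) ∧
        (∑ i, p.2 i) ≤ p.1 ∧ 3 * p.1 - (∑ i, p.2 i) ≤ 1} with hSdef
  have e := volume_preserving_piFinSuccAbove (fun _ : Fin (r + 1) => ℝ) 0
  rw [← e.measure_preimage_equiv S]
  have hT : (MeasurableEquiv.piFinSuccAbove (fun _ : Fin (r + 1) => ℝ) 0) ⁻¹' S
      = (Matrix.toLin' (Mm r)) ⁻¹' {y : Fin (r + 1) → ℝ | (∀ i, 0 ≤ y i) ∧ ∑ i, y i ≤ 1} := by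
    ext x
    have hmem : x ∈ (MeasurableEquiv.piFinSuccAbove (fun _ : Fin (r + 1) => ℝ) 0) ⁻¹' S ↔
        ((∀ i j : Fin r, i ≤ j → x j.succ ≤ x i.succ) ∧ (∀ i : Fin r, 0 ≤ x i.succ) ∧
          (∑ j : Fin r, x j.succ) ≤ x 0 ∧ 3 * x 0 - (∑ j : Fin r, x j.succ) ≤ 1) := by
      simp only [hSdef, Set.mem_preimage, Set.mem_setOf_eq,
        MeasurableEquiv.piFinSuccAbove_apply, Fin.insertNthEquiv_symm_apply,
        Fin.removeNth_zero]
      rfl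
    rw [hmem, Set.mem_preimage, Set.mem_setOf_eq]
    rw [Fin.forall_fin_succ, Fin.sum_univ_succ, row0]
    simp only [rowi]
    rw [abel2]
    constructor
    · rintro ⟨h1, h2, h3, h4⟩
      have hadj := (mono_iff r x).mp ⟨h1, h2⟩
      refine ⟨⟨by linarith, fun i => ?_⟩, by linarith⟩
      have := hadj i
      have hc : (0 : ℝ) ≤ 2 * (((i : ℕ) : ℝ) + 1) := by positivity
      exact mul_nonneg hc (sub_nonneg.mpr this)
    · rintro ⟨⟨ha, hb⟩, hc⟩
      have hadj : ∀ i : Fin r, xe r x ((i : ℕ) + 2) ≤ xe r x ((i : ℕ) + 1) := by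
        intro i
        nlinarith [hb i, Nat.cast_nonneg (α := ℝ) (i : ℕ)]
      obtain ⟨h1, h2⟩ := (mono_iff r x).mpr hadj
      exact ⟨h1, h2, by linarith, by linarith⟩
  rw [hT]
  have hld : LinearMap.det (Matrix.toLin' (Mm r)) = 3 * 2 ^ r * (Nat.factorial r : ℝ) := by
    rw [LinearMap.det_toLin', Mm_det]
  have hfacr : (0 : ℝ) < (Nat.factorial r : ℝ) := by
    exact_mod_cast Nat.factorial_pos r
  have hfacr1 : (0 : ℝ) < (Nat.factorial (r + 1) : ℝ) := by
    exact_mod_cast Nat.factorial_pos (r + 1)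
  have hne : LinearMap.det (Matrix.toLin' (Mm r)) ≠ 0 := by
    rw [hld]; positivity
  rw [Measure.addHaar_preimage_linearMap volume hne,
    simplex_volume (r + 1) 1 zero_le_one, hld]
  rw [← ENNReal.ofReal_mul (by positivity)]
  congr 1
  rw [abs_of_pos (by positivity), one_pow]
  field_simp
end

section
/- For every integer r ≥ 2, the Lebesgue measure in ℝ^{1+r} of the set { (a, b₁, …, b_r) : b₁ ≥ b₂ ≥ ⋯ ≥ b_{r−1} ≥ 0, b_r ≤ 0, b₁ + ⋯ + b_{r−1} ≤ a, and 3a − (b₁ + ⋯ + b_r) ≤ 1 } equals 1/(3 · 2^{r−1} · (r−1)! · r! · (r+1)). -/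
open MeasureTheory

/-- 1-D integral workhorse. -/
lemma aux_lint_pow (t : ℝ) (ht : 0 ≤ t) (m : ℕ) (c : ℝ) (hc : 0 < c) :
    ∫⁻ u in Set.Icc (0:ℝ) t, ENNReal.ofReal ((t - u) ^ m / c) =
      ENNReal.ofReal (t ^ (m + 1) / (((m : ℝ) + 1) * c)) := by
  have hcont : Continuous fun u : ℝ => (t - u) ^ m / c :=
    ((continuous_const.sub continuous_id).pow m).div_const c
  have hint : IntegrableOn (fun u : ℝ => (t - u) ^ m / c) (Set.Icc 0 t) :=
    hcont.integrableOn_Icc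
  rw [← ofReal_integral_eq_lintegral_ofReal hint]
  · congr 1
    rw [MeasureTheory.integral_Icc_eq_integral_Ioc,
      ← intervalIntegral.integral_of_le ht]
    rw [intervalIntegral.integral_div]
    rw [intervalIntegral.integral_comp_sub_left (fun x => x ^ m) t]
    simp only [sub_self, sub_zero]
    rw [integral_pow]
    rw [zero_pow (Nat.succ_ne_zero m), sub_zero, div_div]
  · filter_upwards [self_mem_ae_restrict measurableSet_Icc] with u hu
    exact div_nonneg (pow_nonneg (by linarith [hu.2]) m) hc.le

/-- Volume of the standard corner simplex in `Fin n → ℝ`. -/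
lemma aux_vol_simplex : ∀ (n : ℕ) (t : ℝ), 0 ≤ t →
    volume {y : Fin n → ℝ | (∀ i, 0 ≤ y i) ∧ ∑ i, y i ≤ t} =
      ENNReal.ofReal (t ^ n / (n.factorial : ℝ)) := by
  intro n
  induction n with
  | zero =>
    intro t ht
    have : {y : Fin 0 → ℝ | (∀ i, 0 ≤ y i) ∧ ∑ i, y i ≤ t} = Set.univ := by
      ext y
      simp [Finset.univ_eq_empty, ht]
    rw [this, MeasureTheory.volume_pi, Measure.pi_univ]
    simp [Nat.factorial]
  | succ n ih =>
    intro t ht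
    have hmeasS' : MeasurableSet {q : ℝ × (Fin n → ℝ) |
        0 ≤ q.1 ∧ (∀ i, 0 ≤ q.2 i) ∧ q.1 + ∑ i, q.2 i ≤ t} := by
      have hsnd : ∀ i : Fin n, Measurable fun q : ℝ × (Fin n → ℝ) => q.2 i :=
        fun i => (measurable_pi_apply i).comp measurable_snd
      refine (measurableSet_le measurable_const measurable_fst).inter ?_
      refine MeasurableSet.inter ?_ ?_
      · show MeasurableSet {q : ℝ × (Fin n → ℝ) | ∀ i, 0 ≤ q.2 i}
        rw [Set.setOf_forall]
        exact MeasurableSet.iInter fun i => measurableSet_le measurable_const (hsnd i)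
      · exact measurableSet_le (measurable_fst.add
          (Finset.measurable_sum _ fun i _ => hsnd i)) measurable_const
    have hpre : {y : Fin (n+1) → ℝ | (∀ i, 0 ≤ y i) ∧ ∑ i, y i ≤ t} =
        (MeasurableEquiv.piFinSuccAbove (fun _ => ℝ) 0) ⁻¹'
          {q : ℝ × (Fin n → ℝ) | 0 ≤ q.1 ∧ (∀ i, 0 ≤ q.2 i) ∧ q.1 + ∑ i, q.2 i ≤ t} := by
      ext y
      have happ : (MeasurableEquiv.piFinSuccAbove (fun _ => ℝ) 0) y
          = (y 0, fun j => y j.succ) := by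
        simp [MeasurableEquiv.piFinSuccAbove, Fin.zero_succAbove]; rfl
      simp only [Set.mem_preimage, happ, Set.mem_setOf_eq, Fin.sum_univ_succ]
      constructor
      · rintro ⟨h1, h2⟩
        exact ⟨h1 0, fun i => h1 i.succ, h2⟩
      · rintro ⟨h1, h2, h3⟩
        refine ⟨fun i => ?_, h3⟩
        rcases Fin.eq_zero_or_eq_succ i with rfl | ⟨j, rfl⟩
        · exact h1
        · exact h2 j
    rw [hpre, (volume_preserving_piFinSuccAbove (fun _ : Fin (n+1) => ℝ) 0).measure_preimage
      hmeasS'.nullMeasurableSet]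
    rw [Measure.volume_eq_prod, Measure.prod_apply hmeasS']
    have hslice : ∀ u : ℝ,
        (volume : Measure (Fin n → ℝ)) (Prod.mk u ⁻¹' {q : ℝ × (Fin n → ℝ) |
          0 ≤ q.1 ∧ (∀ i, 0 ≤ q.2 i) ∧ q.1 + ∑ i, q.2 i ≤ t}) =
        Set.indicator (Set.Icc 0 t)
          (fun u => ENNReal.ofReal ((t - u) ^ n / (n.factorial : ℝ))) u := by
      intro u
      by_cases hu : u ∈ Set.Icc (0:ℝ) t
      · rw [Set.indicator_of_mem hu]
        have : (Prod.mk u ⁻¹' {q : ℝ × (Fin n → ℝ) |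
            0 ≤ q.1 ∧ (∀ i, 0 ≤ q.2 i) ∧ q.1 + ∑ i, q.2 i ≤ t}) =
            {y : Fin n → ℝ | (∀ i, 0 ≤ y i) ∧ ∑ i, y i ≤ t - u} := by
          ext y
          simp only [Set.mem_preimage, Set.mem_setOf_eq]
          constructor
          · rintro ⟨_, h2, h3⟩; exact ⟨h2, by linarith⟩
          · rintro ⟨h2, h3⟩; exact ⟨hu.1, h2, by linarith⟩
        rw [this, ih (t - u) (by linarith [hu.2])]
      · rw [Set.indicator_of_notMem hu]
        have : (Prod.mk u ⁻¹' {q : ℝ × (Fin n → ℝ) |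
            0 ≤ q.1 ∧ (∀ i, 0 ≤ q.2 i) ∧ q.1 + ∑ i, q.2 i ≤ t}) = ∅ := by
          ext y
          simp only [Set.mem_preimage, Set.mem_setOf_eq, Set.mem_empty_iff_false, iff_false]
          rintro ⟨h1, h2, h3⟩
          have hsum : 0 ≤ ∑ i, y i := Finset.sum_nonneg fun i _ => h2 i
          exact hu ⟨h1, by linarith⟩
        rw [this, measure_empty]
    rw [lintegral_congr hslice, lintegral_indicator measurableSet_Icc,
      aux_lint_pow t ht n _ (by positivity)]
    congr 1
    rw [Nat.factorial_succ]
    push_cast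
    ring

/-- Volume of the corner simplex in `(Fin n → ℝ) × ℝ`. -/
lemma aux_vol_simplex2 (n : ℕ) (s : ℝ) (hs : 0 ≤ s) :
    (volume : Measure ((Fin n → ℝ) × ℝ))
      {q | (∀ i, 0 ≤ q.1 i) ∧ 0 ≤ q.2 ∧ (∑ i, q.1 i) + q.2 ≤ s} =
      ENNReal.ofReal (s ^ (n + 1) / ((n + 1).factorial : ℝ)) := by
  have hfst : ∀ i : Fin n, Measurable fun q : (Fin n → ℝ) × ℝ => q.1 i :=
    fun i => (measurable_pi_apply i).comp measurable_fst
  have hmeas : MeasurableSet {q : (Fin n → ℝ) × ℝ |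
      (∀ i, 0 ≤ q.1 i) ∧ 0 ≤ q.2 ∧ (∑ i, q.1 i) + q.2 ≤ s} := by
    refine MeasurableSet.inter ?_ (MeasurableSet.inter ?_ ?_)
    · show MeasurableSet {q : (Fin n → ℝ) × ℝ | ∀ i, 0 ≤ q.1 i}
      rw [Set.setOf_forall]
      exact MeasurableSet.iInter fun i => measurableSet_le measurable_const (hfst i)
    · exact measurableSet_le measurable_const measurable_snd
    · exact measurableSet_le
        ((Finset.measurable_sum _ fun i _ => hfst i).add measurable_snd) measurable_const
  rw [Measure.volume_eq_prod, Measure.prod_apply_symm hmeas]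
  have hslice : ∀ γ : ℝ,
      (volume : Measure (Fin n → ℝ)) ((fun e => (e, γ)) ⁻¹' {q : (Fin n → ℝ) × ℝ |
        (∀ i, 0 ≤ q.1 i) ∧ 0 ≤ q.2 ∧ (∑ i, q.1 i) + q.2 ≤ s}) =
      Set.indicator (Set.Icc 0 s)
        (fun γ => ENNReal.ofReal ((s - γ) ^ n / (n.factorial : ℝ))) γ := by
    intro γ
    by_cases hγ : γ ∈ Set.Icc (0:ℝ) s
    · rw [Set.indicator_of_mem hγ]
      have : ((fun e => (e, γ)) ⁻¹' {q : (Fin n → ℝ) × ℝ |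
          (∀ i, 0 ≤ q.1 i) ∧ 0 ≤ q.2 ∧ (∑ i, q.1 i) + q.2 ≤ s}) =
          {y : Fin n → ℝ | (∀ i, 0 ≤ y i) ∧ ∑ i, y i ≤ s - γ} := by
        ext y
        simp only [Set.mem_preimage, Set.mem_setOf_eq]
        constructor
        · rintro ⟨h1, _, h3⟩; exact ⟨h1, by linarith⟩
        · rintro ⟨h1, h3⟩; exact ⟨h1, hγ.1, by linarith⟩
      rw [this, aux_vol_simplex n (s - γ) (by linarith [hγ.2])]
    · rw [Set.indicator_of_notMem hγ]
      have : ((fun e => (e, γ)) ⁻¹' {q : (Fin n → ℝ) × ℝ |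
          (∀ i, 0 ≤ q.1 i) ∧ 0 ≤ q.2 ∧ (∑ i, q.1 i) + q.2 ≤ s}) = ∅ := by
        ext y
        simp only [Set.mem_preimage, Set.mem_setOf_eq, Set.mem_empty_iff_false, iff_false]
        rintro ⟨h1, h2, h3⟩
        have hsum : 0 ≤ ∑ i, y i := Finset.sum_nonneg fun i _ => h1 i
        exact hγ ⟨h2, by linarith⟩
      rw [this, measure_empty]
  rw [lintegral_congr hslice, lintegral_indicator measurableSet_Icc,
    aux_lint_pow s hs n _ (by positivity)]
  congr 1
  rw [Nat.factorial_succ]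
  push_cast
  ring

/-- Volume of the corner simplex in `ℝ × (Fin n → ℝ) × ℝ`. -/
lemma aux_vol_simplex3 (n : ℕ) :
    (volume : Measure (ℝ × (Fin n → ℝ) × ℝ))
      {p | 0 ≤ p.1 ∧ (∀ i, 0 ≤ p.2.1 i) ∧ 0 ≤ p.2.2 ∧ p.1 + ((∑ i, p.2.1 i) + p.2.2) ≤ 1} =
      ENNReal.ofReal (1 / ((n + 2).factorial : ℝ)) := by
  have hb : ∀ i : Fin n, Measurable fun p : ℝ × (Fin n → ℝ) × ℝ => p.2.1 i :=
    fun i => (measurable_pi_apply i).comp (measurable_fst.comp measurable_snd)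
  have hc : Measurable fun p : ℝ × (Fin n → ℝ) × ℝ => p.2.2 :=
    measurable_snd.comp measurable_snd
  have hmeas : MeasurableSet {p : ℝ × (Fin n → ℝ) × ℝ |
      0 ≤ p.1 ∧ (∀ i, 0 ≤ p.2.1 i) ∧ 0 ≤ p.2.2 ∧ p.1 + ((∑ i, p.2.1 i) + p.2.2) ≤ 1} := by
    refine MeasurableSet.inter ?_ (MeasurableSet.inter ?_ (MeasurableSet.inter ?_ ?_))
    · exact measurableSet_le measurable_const measurable_fst
    · show MeasurableSet {p : ℝ × (Fin n → ℝ) × ℝ | ∀ i, 0 ≤ p.2.1 i}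
      rw [Set.setOf_forall]
      exact MeasurableSet.iInter fun i => measurableSet_le measurable_const (hb i)
    · exact measurableSet_le measurable_const hc
    · exact measurableSet_le (measurable_fst.add
        ((Finset.measurable_sum _ fun i _ => hb i).add hc)) measurable_const
  rw [Measure.volume_eq_prod, Measure.prod_apply hmeas]
  have hslice : ∀ α : ℝ,
      (volume : Measure ((Fin n → ℝ) × ℝ)) (Prod.mk α ⁻¹' {p : ℝ × (Fin n → ℝ) × ℝ |
        0 ≤ p.1 ∧ (∀ i, 0 ≤ p.2.1 i) ∧ 0 ≤ p.2.2 ∧ p.1 + ((∑ i, p.2.1 i) + p.2.2) ≤ 1}) =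
      Set.indicator (Set.Icc 0 1)
        (fun α => ENNReal.ofReal ((1 - α) ^ (n + 1) / ((n + 1).factorial : ℝ))) α := by
    intro α
    by_cases hα : α ∈ Set.Icc (0:ℝ) 1
    · rw [Set.indicator_of_mem hα]
      have : (Prod.mk α ⁻¹' {p : ℝ × (Fin n → ℝ) × ℝ |
          0 ≤ p.1 ∧ (∀ i, 0 ≤ p.2.1 i) ∧ 0 ≤ p.2.2 ∧ p.1 + ((∑ i, p.2.1 i) + p.2.2) ≤ 1}) =
          {q : (Fin n → ℝ) × ℝ | (∀ i, 0 ≤ q.1 i) ∧ 0 ≤ q.2 ∧ (∑ i, q.1 i) + q.2 ≤ 1 - α} := by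
        ext q
        simp only [Set.mem_preimage, Set.mem_setOf_eq]
        constructor
        · rintro ⟨_, h2, h3, h4⟩; exact ⟨h2, h3, by linarith⟩
        · rintro ⟨h2, h3, h4⟩; exact ⟨hα.1, h2, h3, by linarith⟩
      rw [this, aux_vol_simplex2 n (1 - α) (by linarith [hα.2])]
    · rw [Set.indicator_of_notMem hα]
      have : (Prod.mk α ⁻¹' {p : ℝ × (Fin n → ℝ) × ℝ |
          0 ≤ p.1 ∧ (∀ i, 0 ≤ p.2.1 i) ∧ 0 ≤ p.2.2 ∧ p.1 + ((∑ i, p.2.1 i) + p.2.2) ≤ 1}) = ∅ := by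
        ext q
        simp only [Set.mem_preimage, Set.mem_setOf_eq, Set.mem_empty_iff_false, iff_false]
        rintro ⟨h1, h2, h3, h4⟩
        have hsum : 0 ≤ ∑ i, q.1 i := Finset.sum_nonneg fun i _ => h2 i
        exact hα ⟨h1, by linarith⟩
      rw [this, measure_empty]
  rw [lintegral_congr hslice, lintegral_indicator measurableSet_Icc,
    aux_lint_pow 1 zero_le_one (n + 1) _ (by positivity)]
  congr 1
  rw [one_pow]
  rw [show (n + 2).factorial = (n + 2) * (n + 1).factorial from Nat.factorial_succ (n+1)]
  push_cast
  ring

/-- Shear transformations preserve product Lebesgue measure. -/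
lemma aux_shear_mp {β : Type*} [MeasurableSpace β] (ν : Measure β) [SigmaFinite ν]
    (g : β → ℝ) (hg : Measurable g) :
    MeasurePreserving (fun p : ℝ × β => (p.1 + g p.2, p.2))
      ((volume : Measure ℝ).prod ν) ((volume : Measure ℝ).prod ν) := by
  have hT : Measurable fun p : ℝ × β => (p.1 + g p.2, p.2) :=
    (measurable_fst.add (hg.comp measurable_snd)).prodMk measurable_snd
  refine ⟨hT, ?_⟩
  refine (Measure.prod_eq fun s t hs ht => ?_).symm
  rw [Measure.map_apply hT (hs.prod ht)]
  have hpre : (fun p : ℝ × β => (p.1 + g p.2, p.2)) ⁻¹' (s ×ˢ t) =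
      {p : ℝ × β | p.1 + g p.2 ∈ s ∧ p.2 ∈ t} := rfl
  rw [hpre, Measure.prod_apply_symm]
  · have : ∀ y : β, (volume : Measure ℝ) ((fun x => (x, y)) ⁻¹' {p : ℝ × β | p.1 + g p.2 ∈ s ∧ p.2 ∈ t})
        = Set.indicator t (fun _ => volume s) y := by
      intro y
      by_cases hy : y ∈ t
      · rw [Set.indicator_of_mem hy]
        have : ((fun x => (x, y)) ⁻¹' {p : ℝ × β | p.1 + g p.2 ∈ s ∧ p.2 ∈ t}) =
            (fun x => x + g y) ⁻¹' s := by
          ext x; simp [hy]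
        rw [this, measure_preimage_add_right]
      · rw [Set.indicator_of_notMem hy]
        have : ((fun x => (x, y)) ⁻¹' {p : ℝ × β | p.1 + g p.2 ∈ s ∧ p.2 ∈ t}) = ∅ := by
          ext x; simp [hy]
        rw [this, measure_empty]
    rw [lintegral_congr this, lintegral_indicator ht, setLIntegral_const]
  · exact ((measurable_fst.add (hg.comp measurable_snd)) hs).inter (measurable_snd ht)

/-- Scaling the first factor of a product. -/
lemma aux_prod_map_fst {α β : Type*} [MeasurableSpace α] [MeasurableSpace β]
    (μ : Measure α) (ν : Measure β) [SFinite μ] [SFinite ν]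
    (f : α → α) (hf : Measurable f) (c : ENNReal) (hc : c ≠ ⊤)
    (h : ∀ s : Set α, MeasurableSet s → μ (f ⁻¹' s) = c * μ s)
    (X : Set (α × β)) (hX : MeasurableSet X) :
    (μ.prod ν) ((Prod.map f id) ⁻¹' X) = c * (μ.prod ν) X := by
  have hXpre : MeasurableSet ((Prod.map f id) ⁻¹' X) :=
    (hf.prodMap measurable_id) hX
  rw [Measure.prod_apply_symm hXpre, Measure.prod_apply_symm hX]
  have : ∀ y : β, μ ((fun x => (x, y)) ⁻¹' ((Prod.map f id) ⁻¹' X)) =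
      c * μ ((fun x => (x, y)) ⁻¹' X) := by
    intro y
    have hpre : ((fun x => (x, y)) ⁻¹' ((Prod.map f id) ⁻¹' X)) =
        f ⁻¹' ((fun x => (x, y)) ⁻¹' X) := rfl
    rw [hpre, h _ (hX.preimage measurable_prodMk_right)]
  rw [lintegral_congr this, lintegral_const_mul' c _ hc]

/-- Scaling the second factor of a product. -/
lemma aux_prod_map_snd {α β : Type*} [MeasurableSpace α] [MeasurableSpace β]
    (μ : Measure α) (ν : Measure β) [SFinite μ] [SFinite ν]
    (g : β → β) (hg : Measurable g) (c : ENNReal) (hc : c ≠ ⊤)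
    (h : ∀ s : Set β, MeasurableSet s → ν (g ⁻¹' s) = c * ν s)
    (X : Set (α × β)) (hX : MeasurableSet X) :
    (μ.prod ν) ((Prod.map id g) ⁻¹' X) = c * (μ.prod ν) X := by
  have hXpre : MeasurableSet ((Prod.map id g) ⁻¹' X) :=
    (measurable_id.prodMap hg) hX
  rw [Measure.prod_apply hXpre, Measure.prod_apply hX]
  have : ∀ x : α, ν (Prod.mk x ⁻¹' ((Prod.map id g) ⁻¹' X)) =
      c * ν (Prod.mk x ⁻¹' X) := by
    intro x
    have hpre : (Prod.mk x ⁻¹' ((Prod.map id g) ⁻¹' X)) =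
        g ⁻¹' (Prod.mk x ⁻¹' X) := rfl
    rw [hpre, h _ (hX.preimage measurable_prodMk_left)]
  rw [lintegral_congr this, lintegral_const_mul' c _ hc]

/-- Next entry, with `0` past the end. -/
def auxSucc (n : ℕ) (b : Fin n → ℝ) (i : Fin n) : ℝ :=
  if h : (i : ℕ) + 1 < n then b ⟨(i : ℕ) + 1, h⟩ else 0

/-- The difference/scaling linear map. -/
noncomputable def auxM (n : ℕ) : (Fin n → ℝ) →ₗ[ℝ] (Fin n → ℝ) where
  toFun b := fun i => (2 * (i : ℝ) + 2) * (b i - auxSucc n b i)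
  map_add' b b' := by
    funext i
    by_cases h : (i : ℕ) + 1 < n <;> simp [auxSucc, h] <;> ring
  map_smul' r b := by
    funext i
    by_cases h : (i : ℕ) + 1 < n <;> simp [auxSucc, h] <;> ring

lemma auxM_apply (n : ℕ) (b : Fin n → ℝ) (i : Fin n) :
    auxM n b i = (2 * (i : ℝ) + 2) * (b i - auxSucc n b i) := rfl

lemma auxM_det (n : ℕ) : LinearMap.det (auxM n) = (2 ^ n * n.factorial : ℝ) := by
  rw [← LinearMap.det_toMatrix']
  have htri : (LinearMap.toMatrix' (auxM n)).BlockTriangular id := by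
    intro i j hij
    have hij' : (j : ℕ) < (i : ℕ) := hij
    rw [LinearMap.toMatrix'_apply, auxM_apply]
    have h1 : (if i = j then (1:ℝ) else 0) = 0 := if_neg (by
      intro h; subst h; exact lt_irrefl _ hij')
    have h2 : auxSucc n (fun j' => if j' = j then (1:ℝ) else 0) i = 0 := by
      unfold auxSucc
      split
      · exact if_neg (by
          intro h
          have : (i : ℕ) + 1 = (j : ℕ) := congrArg Fin.val h
          omega)
      · rfl
    rw [show Pi.single j (1:ℝ) = (fun j' => if j' = j then (1:ℝ) else 0) from
      funext fun j' => Pi.single_apply j 1 j']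
    simp only [h1, h2]
    ring
  rw [Matrix.det_of_upperTriangular htri]
  have hdiag : ∀ i : Fin n, LinearMap.toMatrix' (auxM n) i i = 2 * (i : ℝ) + 2 := by
    intro i
    rw [LinearMap.toMatrix'_apply, auxM_apply]
    have h1 : (if i = i then (1:ℝ) else 0) = 1 := if_pos rfl
    have h2 : auxSucc n (fun j' => if j' = i then (1:ℝ) else 0) i = 0 := by
      unfold auxSucc
      split
      · exact if_neg (by
          intro h
          have : (i : ℕ) + 1 = (i : ℕ) := congrArg Fin.val h
          omega)
      · rfl
    rw [show Pi.single i (1:ℝ) = (fun j' => if j' = i then (1:ℝ) else 0) from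
      funext fun j' => Pi.single_apply i 1 j']
    beta_reduce
    rw [h1, h2]
    ring
  calc ∏ i : Fin n, LinearMap.toMatrix' (auxM n) i i
      = ∏ i : Fin n, (2 * (i : ℝ) + 2) := Finset.prod_congr rfl fun i _ => hdiag i
    _ = 2 ^ n * n.factorial := by
        have : ∀ i : Fin n, 2 * (i : ℝ) + 2 = 2 * ((i : ℝ) + 1) := fun i => by ring
        rw [Finset.prod_congr rfl fun i _ => this i, Finset.prod_mul_distrib,
          Finset.prod_const, Finset.card_univ, Fintype.card_fin]
        congr 1
        rw [Fin.prod_univ_eq_prod_range (fun k => ((k : ℝ) + 1)) n,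
          ← Finset.prod_range_add_one_eq_factorial n, Nat.cast_prod]
        push_cast
        rfl

lemma auxM_sum (n : ℕ) (b : Fin n → ℝ) :
    ∑ i, auxM n b i = 2 * ∑ i, b i := by
  classical
  set b' : ℕ → ℝ := fun k => if h : k < n then b ⟨k, h⟩ else 0 with hb'
  have hb : ∀ i : Fin n, b i = b' i := fun i => by simp [hb', i.isLt]
  have hsucc : ∀ i : Fin n, auxSucc n b i = b' ((i : ℕ) + 1) := fun i => by
    unfold auxSucc
    by_cases h : (i : ℕ) + 1 < n <;> simp [hb', h]
  have key : ∑ i : Fin n, ((i : ℝ) + 1) * (b i - auxSucc n b i) = ∑ i, b i := by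
    have h1 : ∑ i : Fin n, ((i : ℝ) + 1) * (b i - auxSucc n b i)
        = ∑ k ∈ Finset.range n, ((k : ℝ) + 1) * (b' k - b' (k + 1)) := by
      rw [← Fin.sum_univ_eq_sum_range (fun k => ((k : ℝ) + 1) * (b' k - b' (k + 1))) n]
      exact Finset.sum_congr rfl fun i _ => by rw [hb i, hsucc i]
    have h2 : ∑ k ∈ Finset.range n, ((k : ℝ) + 1) * (b' k - b' (k + 1))
        = (∑ k ∈ Finset.range n, ((k : ℝ) + 1) * b' k)
          - ∑ k ∈ Finset.range n, ((k : ℝ) + 1) * b' (k + 1) := by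
      rw [← Finset.sum_sub_distrib]
      exact Finset.sum_congr rfl fun k _ => by ring
    have h3 : ∑ k ∈ Finset.range n, ((k : ℝ) + 1) * b' (k + 1)
        = ∑ k ∈ Finset.range n, (k : ℝ) * b' k := by
      have := Finset.sum_range_succ' (fun k => (k : ℝ) * b' k) n
      have hzero : ((0 : ℕ) : ℝ) * b' 0 = 0 := by simp
      have hn : ((n : ℕ) : ℝ) * b' n = 0 := by simp [hb']
      calc ∑ k ∈ Finset.range n, ((k : ℝ) + 1) * b' (k + 1)
          = ∑ k ∈ Finset.range n, (((k + 1 : ℕ) : ℝ)) * b' (k + 1) := by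
            exact Finset.sum_congr rfl fun k _ => by push_cast; ring
        _ = ∑ k ∈ Finset.range (n + 1), ((k : ℕ) : ℝ) * b' k := by
            rw [this, hzero, add_zero]
        _ = ∑ k ∈ Finset.range n, ((k : ℕ) : ℝ) * b' k := by
            rw [Finset.sum_range_succ, hn, add_zero]
    rw [h1, h2, h3]
    have h4 : (∑ k ∈ Finset.range n, ((k : ℝ) + 1) * b' k)
        - ∑ k ∈ Finset.range n, (k : ℝ) * b' k = ∑ k ∈ Finset.range n, b' k := by
      rw [← Finset.sum_sub_distrib]
      exact Finset.sum_congr rfl fun k _ => by ring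
    rw [h4, ← Fin.sum_univ_eq_sum_range (fun k => b' k) n]
    exact Finset.sum_congr rfl fun i _ => (hb i).symm
  calc ∑ i, auxM n b i = ∑ i : Fin n, 2 * (((i : ℝ) + 1) * (b i - auxSucc n b i)) :=
        Finset.sum_congr rfl fun i _ => by rw [auxM_apply]; ring
    _ = 2 * ∑ i : Fin n, ((i : ℝ) + 1) * (b i - auxSucc n b i) := by
        rw [Finset.mul_sum]
    _ = 2 * ∑ i, b i := by rw [key]

lemma aux_order_iff (n : ℕ) (b : Fin n → ℝ) :
    ((∀ i j : Fin n, i ≤ j → b j ≤ b i) ∧ (∀ i, 0 ≤ b i)) ↔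
      (∀ i : Fin n, auxSucc n b i ≤ b i) := by
  constructor
  · rintro ⟨hmono, hpos⟩ i
    unfold auxSucc
    split
    · exact hmono i ⟨(i : ℕ) + 1, by assumption⟩ (by simp [Fin.le_def])
    · exact hpos i
  · intro h
    have step : ∀ (k : ℕ) (i j : Fin n), (j : ℕ) = (i : ℕ) + k → b j ≤ b i := by
      intro k
      induction k with
      | zero =>
        intro i j hij
        have : i = j := Fin.ext (by omega)
        subst this; exact le_refl _
      | succ k ih =>
        intro i j hij
        have hk : (i : ℕ) + k < n := by have := j.isLt; omega
        set m : Fin n := ⟨(i : ℕ) + k, hk⟩ with hm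
        have h1 : b j ≤ b m := by
          have := h m
          unfold auxSucc at this
          rw [dif_pos (show (m : ℕ) + 1 < n by have := j.isLt; simp [hm]; omega)] at this
          have hjm : j = ⟨(m : ℕ) + 1, by have := j.isLt; simp [hm]; omega⟩ :=
            Fin.ext (by simp [hm]; omega)
          rw [hjm]
          exact this
        exact le_trans h1 (ih i m rfl)
    constructor
    · intro i j hij
      exact step ((j : ℕ) - (i : ℕ)) i j (by have := Fin.le_def.mp hij; omega)
    · intro i
      have hn : 0 < n := i.pos
      set l : Fin n := ⟨n - 1, by omega⟩ with hl
      have hlast : 0 ≤ b l := by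
        have := h l
        unfold auxSucc at this
        rw [dif_neg (by simp [hl]; omega)] at this
        exact this
      have : b l ≤ b i := step ((n - 1) - (i : ℕ)) i l (by have := i.isLt; simp [hl]; omega)
      linarith

lemma aux_scale3 : ∀ s : Set ℝ, MeasurableSet s →
    volume ((fun x : ℝ => 3 * x) ⁻¹' s) = ENNReal.ofReal (1/3) * volume s := by
  intro s hs
  rw [← Measure.map_apply (measurable_const_mul 3) hs,
    Real.map_volume_mul_left (by norm_num : (3:ℝ) ≠ 0)]
  rw [Measure.smul_apply, smul_eq_mul]
  norm_num [abs_of_pos]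

lemma aux_scaleM (n : ℕ) : ∀ s : Set (Fin n → ℝ), MeasurableSet s →
    volume ((auxM n) ⁻¹' s) =
      ENNReal.ofReal (1 / (2 ^ n * n.factorial : ℝ)) * volume s := by
  intro s hs
  have hdet : LinearMap.det (auxM n) ≠ 0 := by
    rw [auxM_det]; positivity
  have hM : Measurable (auxM n) := (auxM n).continuous_of_finiteDimensional.measurable
  rw [← Measure.map_apply hM hs, Real.map_linearMap_volume_pi_eq_smul_volume_pi hdet,
    Measure.smul_apply, smul_eq_mul]
  congr 2
  rw [auxM_det, abs_of_pos (by positivity)]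
  rw [one_div]

lemma aux_scale_h2 (n : ℕ) : ∀ s : Set ((Fin n → ℝ) × ℝ), MeasurableSet s →
    volume ((Prod.map (auxM n) (Neg.neg : ℝ → ℝ)) ⁻¹' s) =
      ENNReal.ofReal (1 / (2 ^ n * n.factorial : ℝ)) * volume s := by
  intro s hs
  have hM : Measurable (auxM n) := (auxM n).continuous_of_finiteDimensional.measurable
  have hsplit : (Prod.map (auxM n) (Neg.neg : ℝ → ℝ)) ⁻¹' s =
      (Prod.map (auxM n) id) ⁻¹' ((Prod.map id (Neg.neg : ℝ → ℝ)) ⁻¹' s) := rfl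
  rw [hsplit, Measure.volume_eq_prod]
  rw [aux_prod_map_fst volume volume (auxM n) hM _ ENNReal.ofReal_ne_top (aux_scaleM n) _
    ((measurable_id.prodMap measurable_neg) hs)]
  rw [aux_prod_map_snd volume volume (Neg.neg : ℝ → ℝ) measurable_neg 1 ENNReal.one_ne_top
    (fun t ht => by rw [Measure.measure_preimage_neg, one_mul]) s hs]
  rw [one_mul]

lemma aux_main (n : ℕ) :
    volume {p : ℝ × (Fin n → ℝ) × ℝ |
        (∀ i j : Fin n, i ≤ j → p.2.1 j ≤ p.2.1 i) ∧
        (∀ i, 0 ≤ p.2.1 i) ∧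
        p.2.2 ≤ 0 ∧
        (∑ i, p.2.1 i) ≤ p.1 ∧
        3 * p.1 - ((∑ i, p.2.1 i) + p.2.2) ≤ 1} =
      ENNReal.ofReal
        (1 / (3 * 2 ^ n * (n.factorial : ℝ) * ((n + 2).factorial : ℝ))) := by
  classical
  set Δ : Set (ℝ × (Fin n → ℝ) × ℝ) :=
    {p | 0 ≤ p.1 ∧ (∀ i, 0 ≤ p.2.1 i) ∧ 0 ≤ p.2.2 ∧ p.1 + ((∑ i, p.2.1 i) + p.2.2) ≤ 1}
    with hΔdef
  have hb : ∀ i : Fin n, Measurable fun p : ℝ × (Fin n → ℝ) × ℝ => p.2.1 i :=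
    fun i => (measurable_pi_apply i).comp (measurable_fst.comp measurable_snd)
  have hcm : Measurable fun p : ℝ × (Fin n → ℝ) × ℝ => p.2.2 :=
    measurable_snd.comp measurable_snd
  have hΔ : MeasurableSet Δ := by
    refine MeasurableSet.inter ?_ (MeasurableSet.inter ?_ (MeasurableSet.inter ?_ ?_))
    · exact measurableSet_le measurable_const measurable_fst
    · show MeasurableSet {p : ℝ × (Fin n → ℝ) × ℝ | ∀ i, 0 ≤ p.2.1 i}
      rw [Set.setOf_forall]
      exact MeasurableSet.iInter fun i => measurableSet_le measurable_const (hb i)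
    · exact measurableSet_le measurable_const hcm
    · exact measurableSet_le (measurable_fst.add
        ((Finset.measurable_sum _ fun i _ => hb i).add hcm)) measurable_const
  have hM : Measurable (auxM n) := (auxM n).continuous_of_finiteDimensional.measurable
  have hh2 : Measurable (Prod.map (auxM n) (Neg.neg : ℝ → ℝ)) :=
    hM.prodMap measurable_neg
  set X1 : Set (ℝ × (Fin n → ℝ) × ℝ) :=
    (Prod.map id (Prod.map (auxM n) (Neg.neg : ℝ → ℝ))) ⁻¹' Δ with hX1def
  have hX1 : MeasurableSet X1 := (measurable_id.prodMap hh2) hΔ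
  set X0 : Set (ℝ × (Fin n → ℝ) × ℝ) :=
    (Prod.map (fun x : ℝ => 3 * x) id) ⁻¹' X1 with hX0def
  have hX0 : MeasurableSet X0 := ((measurable_const_mul 3).prodMap measurable_id) hX1
  set g : (Fin n → ℝ) × ℝ → ℝ := fun q => -∑ i, q.1 i with hgdef
  have hg : Measurable g :=
    (Finset.measurable_sum _ fun i _ => (measurable_pi_apply i).comp measurable_fst).neg
  have hset : {p : ℝ × (Fin n → ℝ) × ℝ |
        (∀ i j : Fin n, i ≤ j → p.2.1 j ≤ p.2.1 i) ∧
        (∀ i, 0 ≤ p.2.1 i) ∧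
        p.2.2 ≤ 0 ∧
        (∑ i, p.2.1 i) ≤ p.1 ∧
        3 * p.1 - ((∑ i, p.2.1 i) + p.2.2) ≤ 1} =
      (fun p : ℝ × (Fin n → ℝ) × ℝ => (p.1 + g p.2, p.2)) ⁻¹' X0 := by
    ext ⟨a, b, c⟩
    simp only [hX0def, hX1def, hΔdef, hgdef, Set.mem_preimage, Set.mem_setOf_eq,
      Prod.map_apply, id_eq]
    constructor
    · rintro ⟨h1, h2, h3, h4, h5⟩
      have horder := (aux_order_iff n b).mp ⟨h1, h2⟩
      refine ⟨by linarith, fun i => ?_, by linarith, ?_⟩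
      · rw [auxM_apply]
        have : (0:ℝ) < 2 * (i : ℝ) + 2 := by positivity
        exact mul_nonneg this.le (sub_nonneg.mpr (horder i))
      · rw [auxM_sum]
        linarith
    · rintro ⟨h1, h2, h3, h4⟩
      rw [auxM_sum] at h4
      have horder : ∀ i : Fin n, auxSucc n b i ≤ b i := by
        intro i
        have hh := h2 i
        rw [auxM_apply] at hh
        have hpos : (0:ℝ) < 2 * (i : ℝ) + 2 := by positivity
        nlinarith
      obtain ⟨hmono, hpos⟩ := (aux_order_iff n b).mpr horder
      exact ⟨hmono, hpos, by linarith, by linarith, by linarith⟩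
  rw [hset, Measure.volume_eq_prod]
  rw [(aux_shear_mp volume g hg).measure_preimage hX0.nullMeasurableSet]
  rw [hX0def]
  rw [aux_prod_map_fst volume volume _ (measurable_const_mul 3) _ ENNReal.ofReal_ne_top
    aux_scale3 X1 hX1]
  rw [hX1def]
  rw [aux_prod_map_snd volume volume _ hh2 _ ENNReal.ofReal_ne_top (aux_scale_h2 n) Δ hΔ]
  rw [show ((volume : Measure ℝ).prod volume) Δ = volume Δ from rfl, hΔdef,
    aux_vol_simplex3 n]
  rw [← ENNReal.ofReal_mul (by positivity), ← ENNReal.ofReal_mul (by positivity)]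
  congr 1
  have h2n : (0:ℝ) < 2 ^ n * n.factorial := by positivity
  have hfac : (0:ℝ) < ((n + 2).factorial : ℝ) := by positivity
  field_simp


/-- The unique non-nef Zariski chamber of finite volume on the blow-up `X_r^∞` of `ℙ²`
in `r` infinitely near points along a line, namely the chamber supported on `E_r`:
the Lebesgue measure in `ℝ^{1+r} = ℝ × ℝ^{r−1} × ℝ` of
`{(a, b₁, …, b_{r−1}, b_r) : b₁ ≥ … ≥ b_{r−1} ≥ 0, b_r ≤ 0, b₁ + ⋯ + b_{r−1} ≤ a,
3a − Σbᵢ ≤ 1}` equals `1/(3 · 2^{r−1} · (r−1)! · r! · (r+1))`. -/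
theorem chamber_volume_infinitely_near (r : ℕ) (hr : 2 ≤ r) :
    volume {p : ℝ × (Fin (r - 1) → ℝ) × ℝ |
        (∀ i j : Fin (r - 1), i ≤ j → p.2.1 j ≤ p.2.1 i) ∧
        (∀ i, 0 ≤ p.2.1 i) ∧
        p.2.2 ≤ 0 ∧
        (∑ i, p.2.1 i) ≤ p.1 ∧
        3 * p.1 - ((∑ i, p.2.1 i) + p.2.2) ≤ 1} =
      ENNReal.ofReal
        (1 / (3 * 2 ^ (r - 1) * Nat.factorial (r - 1) * Nat.factorial r * (r + 1))) := by
  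
  rw [aux_main (r - 1)]
  congr 1
  have h1 : r - 1 + 2 = r + 1 := by omega
  rw [h1]
  have h2 : (r + 1).factorial = (r + 1) * r.factorial := Nat.factorial_succ r
  rw [h2]
  push_cast
  ring
end

section
/- The Lebesgue measure in ℝ⁴ of the set { (a, b₁, b₂, b₃) : bᵢ ≥ 0 for all i, bᵢ + b_j ≤ a for all i ≠ j, and 3a − (b₁ + b₂ + b₃) ≤ 1 } equals 1/288. -/
open MeasureTheory Set intervalIntegral ENNReal

lemma ofReal_sup_zero (x : ℝ) : ENNReal.ofReal (x ⊔ 0) = ENNReal.ofReal x := by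
  rcases le_total x 0 with h | h
  · rw [sup_eq_right.2 h, ENNReal.ofReal_zero, eq_comm, ENNReal.ofReal_eq_zero]; exact h
  · rw [sup_eq_left.2 h]
lemma core (n : ℕ) (hn : 1 ≤ n) (k A c : ℝ) (hk : 0 < k) (hA : 0 ≤ A) :
    ∫⁻ z in Ici (0:ℝ), ENNReal.ofReal (A * ((c - k*z) ⊔ 0)^n) =
      ENNReal.ofReal ((A/(k*(n+1))) * (c ⊔ 0)^(n+1)) := by
  rcases le_or_gt c 0 with hc | hc
  · have h1 : ∀ z ∈ Ici (0:ℝ), ENNReal.ofReal (A * ((c - k*z) ⊔ 0)^n) = 0 := by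
      intro z hz
      have : c - k*z ≤ 0 := by nlinarith [hz.out]
      rw [sup_eq_right.2 this, zero_pow (by omega), mul_zero, ENNReal.ofReal_zero]
    rw [setLIntegral_congr_fun measurableSet_Ici h1]
    rw [lintegral_zero, sup_eq_right.2 hc, zero_pow (by omega), mul_zero, ENNReal.ofReal_zero]
  · have hck : 0 ≤ c / k := le_of_lt (div_pos hc hk)
    have hsplit : Ici (0:ℝ) = Ico 0 (c/k) ∪ Ici (c/k) := (Ico_union_Ici_eq_Ici hck).symm
    have hdisj : Disjoint (Ico (0:ℝ) (c/k)) (Ici (c/k)) := (Iio_disjoint_Ici le_rfl).mono_left Ico_subset_Iio_self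
    rw [hsplit, lintegral_union measurableSet_Ici hdisj]
    have h2 : ∀ z ∈ Ici (c/k), ENNReal.ofReal (A * ((c - k*z) ⊔ 0)^n) = 0 := by
      intro z hz
      have : c - k*z ≤ 0 := by
        have h := hz.out
        have := (div_le_iff₀ hk).1 h
        nlinarith
      rw [sup_eq_right.2 this, zero_pow (by omega), mul_zero, ENNReal.ofReal_zero]
    rw [setLIntegral_congr_fun measurableSet_Ici h2,
      lintegral_zero, add_zero]
    have h3 : ∀ z ∈ Ico (0:ℝ) (c/k), ENNReal.ofReal (A * ((c - k*z) ⊔ 0)^n)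
        = ENNReal.ofReal (A * (c - k*z)^n) := by
      intro z hz
      have : 0 ≤ c - k*z := by
        have h := (lt_div_iff₀ hk).1 hz.2
        nlinarith
      rw [sup_eq_left.2 this]
    rw [setLIntegral_congr_fun measurableSet_Ico h3]
    have hint : IntegrableOn (fun z => A * (c - k*z)^n) (Ico 0 (c/k)) volume := by
      apply (Continuous.integrableOn_Icc (by continuity)).mono_set Ico_subset_Icc_self
    have hpos : 0 ≤ᵐ[volume.restrict (Ico 0 (c/k))] fun z => A * (c - k*z)^n := by
      refine (ae_restrict_iff' measurableSet_Ico).2 (Filter.Eventually.of_forall ?_)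
      intro z hz
      have : 0 ≤ c - k*z := by nlinarith [(lt_div_iff₀ hk).1 hz.2]
      positivity
    rw [← ofReal_integral_eq_lintegral_ofReal hint hpos]
    congr 1
    rw [MeasureTheory.setIntegral_congr_set Ico_ae_eq_Ioc,
      ← intervalIntegral.integral_of_le hck]
    have : ∀ x : ℝ, A * (c - k*x)^n = A * ((-k)*x + c)^n := by intro x; ring_nf
    rw [intervalIntegral.integral_congr (fun x _ => this x)]
    rw [intervalIntegral.integral_const_mul]
    rw [intervalIntegral.integral_comp_mul_add (fun x => x^n) (by linarith : (-k) ≠ 0) c]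
    rw [integral_pow]
    rw [sup_eq_left.2 hc.le]
    have h0 : (-k) * (c/k) + c = 0 := by field_simp; ring
    have h1 : (-k) * 0 + c = c := by ring
    rw [h0, h1]
    simp only [smul_eq_mul, zero_pow (by omega : n+1 ≠ 0)]
    field_simp
    ring
lemma pi2 (k A c : ℝ) (hk : 0 < k) (hA : 0 ≤ A) :
    ∫⁻ y in {y : Fin 2 → ℝ | ∀ i, 0 ≤ y i},
        ENNReal.ofReal (A * ((c - k * ∑ i, y i) ⊔ 0)) =
      ENNReal.ofReal ((A/(k*2)/(k*3)) * (c ⊔ 0)^3) := by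
  have hS : MeasurableSet {y : Fin 2 → ℝ | ∀ i, 0 ≤ y i} := by
    rw [Set.setOf_forall]
    exact MeasurableSet.iInter fun i => measurableSet_le measurable_const (measurable_pi_apply i)
  set g : (Fin 2 → ℝ) → ℝ≥0∞ := fun y => ENNReal.ofReal (A * ((c - k * ∑ i, y i) ⊔ 0)) with hg
  have mp := (volume_preserving_finTwoArrow ℝ).symm
  have key := mp.setLIntegral_comp_preimage_emb
    (MeasurableEquiv.finTwoArrow (α := ℝ)).symm.measurableEmbedding g
    {y : Fin 2 → ℝ | ∀ i, 0 ≤ y i}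
  rw [← key]
  have hpre : (MeasurableEquiv.finTwoArrow (α := ℝ)).symm ⁻¹' {y : Fin 2 → ℝ | ∀ i, 0 ≤ y i}
      = Ici (0:ℝ) ×ˢ Ici (0:ℝ) := by
    ext ⟨x, y⟩
    simp [Fin.forall_fin_two, Prod.le_def]
  have hcomp : ∀ p : ℝ × ℝ, g ((MeasurableEquiv.finTwoArrow (α := ℝ)).symm p)
      = ENNReal.ofReal (A * ((c - k * (p.1 + p.2)) ⊔ 0)) := by
    intro p
    simp [hg, Fin.sum_univ_two]
  rw [hpre]
  calc ∫⁻ p in Ici (0:ℝ) ×ˢ Ici (0:ℝ), g ((MeasurableEquiv.finTwoArrow (α := ℝ)).symm p)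
      = ∫⁻ p in Ici (0:ℝ) ×ˢ Ici (0:ℝ),
          ENNReal.ofReal (A * ((c - k * (p.1 + p.2)) ⊔ 0)) := by
        exact lintegral_congr fun p => by rw [hcomp]
    _ = ∫⁻ x in Ici (0:ℝ), ∫⁻ y in Ici (0:ℝ),
          ENNReal.ofReal (A * ((c - k * (x + y)) ⊔ 0)) := by
        rw [Measure.volume_eq_prod, ← Measure.prod_restrict]
        exact lintegral_prod _ (by fun_prop)
    _ = ∫⁻ x in Ici (0:ℝ), ENNReal.ofReal ((A/(k*2)) * (((c - k*x) ⊔ 0))^2) := by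
        refine setLIntegral_congr_fun measurableSet_Ici ?_
        intro x _
        have h1 : ∀ y : ℝ, ENNReal.ofReal (A * ((c - k * (x + y)) ⊔ 0))
            = ENNReal.ofReal (A * (((c - k*x) - k*y) ⊔ 0)^1) := by
          intro y
          rw [pow_one]
          have h : c - k * (x + y) = (c - k*x) - k*y := by ring
          rw [h]
        simp_rw [h1]
        have := core 1 le_rfl k A (c - k*x) hk hA
        rw [this]; norm_num
    _ = ENNReal.ofReal ((A/(k*2)/(k*3)) * (c ⊔ 0)^3) := by
        have h1 : ∀ x : ℝ, ENNReal.ofReal ((A/(k*2)) * (((c - k*x) ⊔ 0))^2)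
            = ENNReal.ofReal ((A/(k*2)) * (((c - k*x) ⊔ 0))^2) := fun _ => rfl
        have := core 2 (by norm_num) k (A/(k*2)) c hk (by positivity)
        rw [this]; norm_num
lemma pi3 (k A c : ℝ) (hk : 0 < k) (hA : 0 ≤ A) :
    ∫⁻ b in {b : Fin 3 → ℝ | ∀ i, 0 ≤ b i},
        ENNReal.ofReal (A * ((c - k * ∑ i, b i) ⊔ 0)) =
      ENNReal.ofReal ((A/(k*2)/(k*3)/(k*4)) * (c ⊔ 0)^4) := by
  have hS2 : MeasurableSet {y : Fin 2 → ℝ | ∀ i, 0 ≤ y i} := by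
    rw [Set.setOf_forall]
    exact MeasurableSet.iInter fun i => measurableSet_le measurable_const (measurable_pi_apply i)
  set e := MeasurableEquiv.piFinSuccAbove (fun _ : Fin 3 => ℝ) 0 with he
  have mp := (volume_preserving_piFinSuccAbove (fun _ : Fin 3 => ℝ) 0).symm
  set g : (Fin 3 → ℝ) → ℝ≥0∞ := fun b => ENNReal.ofReal (A * ((c - k * ∑ i, b i) ⊔ 0)) with hg
  have key := mp.setLIntegral_comp_preimage_emb e.symm.measurableEmbedding g
    {b : Fin 3 → ℝ | ∀ i, 0 ≤ b i}
  rw [← key]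
  have hsymm : ∀ p : ℝ × (Fin 2 → ℝ), e.symm p = Fin.cons p.1 p.2 := by
    intro p
    simp [he, MeasurableEquiv.piFinSuccAbove, Fin.insertNthEquiv]
  have hpre : e.symm ⁻¹' {b : Fin 3 → ℝ | ∀ i, 0 ≤ b i}
      = Ici (0:ℝ) ×ˢ {y : Fin 2 → ℝ | ∀ i, 0 ≤ y i} := by
    ext ⟨x, y⟩
    simp only [Set.mem_preimage, hsymm, Set.mem_setOf_eq, Set.mem_prod, Set.mem_Ici]
    rw [Fin.forall_fin_succ]
    simp [Fin.cons_zero, Fin.cons_succ]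
  have hcomp : ∀ p : ℝ × (Fin 2 → ℝ), g (e.symm p)
      = ENNReal.ofReal (A * (((c - k * p.1) - k * ∑ i, p.2 i) ⊔ 0)) := by
    intro p
    rw [hsymm, hg]
    simp only [Fin.sum_cons]
    congr 2
    ring_nf
  rw [hpre]
  calc ∫⁻ p in Ici (0:ℝ) ×ˢ {y : Fin 2 → ℝ | ∀ i, 0 ≤ y i}, g (e.symm p)
      = ∫⁻ p in Ici (0:ℝ) ×ˢ {y : Fin 2 → ℝ | ∀ i, 0 ≤ y i},
          ENNReal.ofReal (A * (((c - k * p.1) - k * ∑ i, p.2 i) ⊔ 0)) :=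
        lintegral_congr fun p => by rw [hcomp]
    _ = ∫⁻ x in Ici (0:ℝ), ∫⁻ y in {y : Fin 2 → ℝ | ∀ i, 0 ≤ y i},
          ENNReal.ofReal (A * (((c - k * x) - k * ∑ i, y i) ⊔ 0)) := by
        rw [Measure.volume_eq_prod, ← Measure.prod_restrict]
        exact lintegral_prod _ (by fun_prop)
    _ = ∫⁻ x in Ici (0:ℝ), ENNReal.ofReal ((A/(k*2)/(k*3)) * (((c - k*x) ⊔ 0))^3) := by
        refine setLIntegral_congr_fun measurableSet_Ici ?_
        intro x _
        exact pi2 k A (c - k*x) hk hA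
    _ = ENNReal.ofReal ((A/(k*2)/(k*3)/(k*4)) * (c ⊔ 0)^4) := by
        have := core 3 (by norm_num) k (A/(k*2)/(k*3)) c hk (by positivity)
        rw [this]; norm_num
lemma hS3meas : MeasurableSet {b : Fin 3 → ℝ | ∀ i, 0 ≤ b i} := by
  rw [Set.setOf_forall]
  exact MeasurableSet.iInter fun i => measurableSet_le measurable_const (measurable_pi_apply i)

lemma volS1 : volume {p : ℝ × (Fin 3 → ℝ) |
      (∀ i, 0 ≤ p.2 i) ∧ (∑ i, p.2 i) ≤ p.1 ∧ 3 * p.1 - (∑ i, p.2 i) ≤ 1}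
    = ENNReal.ofReal (1/576) := by
  have hmeas : MeasurableSet {p : ℝ × (Fin 3 → ℝ) |
      (∀ i, 0 ≤ p.2 i) ∧ (∑ i, p.2 i) ≤ p.1 ∧ 3 * p.1 - (∑ i, p.2 i) ≤ 1} := by
    have h1 : MeasurableSet {p : ℝ × (Fin 3 → ℝ) | ∀ i, 0 ≤ p.2 i} := by
      rw [Set.setOf_forall]
      exact MeasurableSet.iInter fun i =>
        measurableSet_le measurable_const (by fun_prop)
    have h2 : MeasurableSet {p : ℝ × (Fin 3 → ℝ) | (∑ i, p.2 i) ≤ p.1} :=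
      measurableSet_le (by fun_prop) (by fun_prop)
    have h3 : MeasurableSet {p : ℝ × (Fin 3 → ℝ) | 3 * p.1 - (∑ i, p.2 i) ≤ 1} :=
      measurableSet_le (by fun_prop) measurable_const
    rw [Set.setOf_and, Set.setOf_and]
    exact h1.inter (h2.inter h3)
  rw [Measure.volume_eq_prod, Measure.prod_apply_symm hmeas]
  have hslice : ∀ b : Fin 3 → ℝ,
      volume ((fun a => (a, b)) ⁻¹' {p : ℝ × (Fin 3 → ℝ) |
        (∀ i, 0 ≤ p.2 i) ∧ (∑ i, p.2 i) ≤ p.1 ∧ 3 * p.1 - (∑ i, p.2 i) ≤ 1})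
      = Set.indicator {b : Fin 3 → ℝ | ∀ i, 0 ≤ b i}
          (fun b => ENNReal.ofReal (1 * ((1/3 - (2/3) * ∑ i, b i) ⊔ 0))) b := by
    intro b
    by_cases hb : ∀ i, 0 ≤ b i
    · have hpre : ((fun a => (a, b)) ⁻¹' {p : ℝ × (Fin 3 → ℝ) |
          (∀ i, 0 ≤ p.2 i) ∧ (∑ i, p.2 i) ≤ p.1 ∧ 3 * p.1 - (∑ i, p.2 i) ≤ 1})
          = Icc (∑ i, b i) ((1 + ∑ i, b i)/3) := by
        ext a
        simp only [Set.mem_preimage, Set.mem_setOf_eq, Set.mem_Icc]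
        constructor
        · rintro ⟨-, h2, h3⟩; exact ⟨h2, by linarith⟩
        · rintro ⟨h2, h3⟩; exact ⟨hb, h2, by linarith⟩
      rw [hpre, Real.volume_Icc, Set.indicator_of_mem (show b ∈ {b : Fin 3 → ℝ | ∀ i, 0 ≤ b i} from hb)]
      rw [← ofReal_sup_zero ((1 + ∑ i, b i)/3 - ∑ i, b i)]
      congr 1
      rw [one_mul]
      congr 1
      ring
    · have hpre : ((fun a => (a, b)) ⁻¹' {p : ℝ × (Fin 3 → ℝ) |
          (∀ i, 0 ≤ p.2 i) ∧ (∑ i, p.2 i) ≤ p.1 ∧ 3 * p.1 - (∑ i, p.2 i) ≤ 1}) = ∅ := by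
        ext a
        simp only [Set.mem_preimage, Set.mem_setOf_eq, Set.mem_empty_iff_false, iff_false]
        rintro ⟨h1, -, -⟩; exact hb h1
      rw [hpre, Set.indicator_of_notMem (show b ∉ {b : Fin 3 → ℝ | ∀ i, 0 ≤ b i} from hb), measure_empty]
  calc ∫⁻ b, volume ((fun a => (a, b)) ⁻¹' _) = ∫⁻ b, Set.indicator {b : Fin 3 → ℝ | ∀ i, 0 ≤ b i}
        (fun b => ENNReal.ofReal (1 * ((1/3 - (2/3) * ∑ i, b i) ⊔ 0))) b :=
      lintegral_congr hslice
    _ = ∫⁻ b in {b : Fin 3 → ℝ | ∀ i, 0 ≤ b i},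
        ENNReal.ofReal (1 * ((1/3 - (2/3) * ∑ i, b i) ⊔ 0)) := lintegral_indicator hS3meas _
    _ = ENNReal.ofReal (1/576) := by
      rw [pi3 (2/3) 1 (1/3) (by norm_num) (by norm_num)]
      rw [sup_eq_left.2 (by norm_num : (0:ℝ) ≤ 1/3)]
      norm_num
noncomputable abbrev EE := ℝ × (Fin 3 → ℝ)

noncomputable def sigmaMap : EE →ₗ[ℝ] EE where
  toFun := fun p => (2 * p.1 - ∑ i, p.2 i, fun i => p.1 - (∑ j, p.2 j) + p.2 i)
  map_add' := by
    intro p q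
    refine Prod.ext ?_ (funext fun i => ?_) <;>
      simp [Finset.sum_add_distrib, Prod.fst_add, Prod.snd_add] <;> ring
  map_smul' := by
    intro c p
    refine Prod.ext ?_ (funext fun i => ?_) <;>
      simp [← Finset.mul_sum, Prod.smul_fst, Prod.smul_snd, smul_eq_mul] <;> ring

lemma sigma_sigma (p : EE) : sigmaMap (sigmaMap p) = p := by
  refine Prod.ext ?_ (funext fun i => ?_) <;>
    simp [sigmaMap, Finset.sum_add_distrib, Finset.sum_sub_distrib, Finset.card_univ] <;> ring

lemma sigma_det : |LinearMap.det sigmaMap| = 1 := by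
  have h : sigmaMap ∘ₗ sigmaMap = LinearMap.id := by
    apply LinearMap.ext
    intro p
    simp [sigma_sigma]
  have h2 : LinearMap.det sigmaMap * LinearMap.det sigmaMap = 1 := by
    rw [← LinearMap.det_comp, h, LinearMap.det_id]
  rcases mul_self_eq_one_iff.1 h2 with h3 | h3 <;> rw [h3] <;> norm_num

instance : Measure.IsAddHaarMeasure (volume : Measure EE) :=
  Measure.prod.instIsAddHaarMeasure _ _

def nS1 : Set EE := {p : EE | (∀ i, 0 ≤ p.2 i) ∧ (∑ i, p.2 i) ≤ p.1 ∧ 3 * p.1 - (∑ i, p.2 i) ≤ 1}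

def nS2 : Set EE := {p : EE | p.2 0 + p.2 1 ≤ p.1 ∧ p.2 0 + p.2 2 ≤ p.1 ∧ p.2 1 + p.2 2 ≤ p.1 ∧
  p.1 ≤ ∑ i, p.2 i ∧ 3 * p.1 - (∑ i, p.2 i) ≤ 1}

lemma sigma_image : sigmaMap '' nS2 = nS1 := by
  apply Set.Subset.antisymm
  · rintro q ⟨p, hp, rfl⟩
    obtain ⟨h01, h02, h12, hs, hk⟩ := hp
    have hsum3 : (∑ i, p.2 i) = p.2 0 + p.2 1 + p.2 2 := Fin.sum_univ_three p.2
    refine ⟨?_, ?_, ?_⟩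
    · intro i
      fin_cases i <;> simp [sigmaMap, Fin.sum_univ_three] <;> linarith
    · simp [sigmaMap, Fin.sum_univ_three]; linarith
    · simp [sigmaMap, Fin.sum_univ_three]; linarith
  · intro q hq
    obtain ⟨h1, hs, hk⟩ := hq
    refine ⟨sigmaMap q, ?_, sigma_sigma q⟩
    have hsum3 : (∑ i, q.2 i) = q.2 0 + q.2 1 + q.2 2 := Fin.sum_univ_three q.2
    have h0 := h1 0; have h1' := h1 1; have h2 := h1 2
    refine ⟨?_, ?_, ?_, ?_, ?_⟩ <;> simp [sigmaMap, Fin.sum_univ_three] <;> linarith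

lemma nS2_meas : MeasurableSet nS2 := by
  unfold nS2
  repeat rw [Set.setOf_and]
  refine (MeasurableSet.inter ?_ (MeasurableSet.inter ?_ (MeasurableSet.inter ?_
    (MeasurableSet.inter ?_ ?_)))) <;>
    exact measurableSet_le (by fun_prop) (by fun_prop)

lemma vol_nS2_eq : volume nS2 = volume nS1 := by
  have h := MeasureTheory.Measure.addHaar_image_linearMap (volume : Measure EE) sigmaMap nS2
  rw [sigma_image, sigma_det] at h
  simp at h
  exact h.symm

noncomputable def phiMap : EE →ₗ[ℝ] ℝ :=
  LinearMap.fst ℝ ℝ (Fin 3 → ℝ) -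
    ∑ i : Fin 3, (LinearMap.proj i).comp (LinearMap.snd ℝ ℝ (Fin 3 → ℝ))

lemma phi_apply (p : EE) : phiMap p = p.1 - ∑ i, p.2 i := by
  simp [phiMap]

lemma inter_null : volume (nS1 ∩ nS2) = 0 := by
  have hker : LinearMap.ker phiMap ≠ ⊤ := by
    intro h
    have h1 : ((1:ℝ), (0 : Fin 3 → ℝ)) ∈ LinearMap.ker phiMap := h ▸ Submodule.mem_top
    rw [LinearMap.mem_ker, phi_apply] at h1
    simp at h1
  refine measure_mono_null ?_ (Measure.addHaar_submodule volume _ hker)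
  rintro p ⟨⟨-, hs1, -⟩, -, -, -, hs2, -⟩
  rw [SetLike.mem_coe, LinearMap.mem_ker, phi_apply]
  linarith

/-- The nef cone volume of the del Pezzo surface `S₃`: the Lebesgue measure in `ℝ⁴` of
`{(a, b₁, b₂, b₃) : bᵢ ≥ 0, bᵢ + b_j ≤ a (i ≠ j), 3a − Σbᵢ ≤ 1}` equals `1/288`. -/
theorem nef_volume_S3 :
    volume {p : ℝ × (Fin 3 → ℝ) |
        (∀ i, 0 ≤ p.2 i) ∧
        (∀ i j : Fin 3, i ≠ j → p.2 i + p.2 j ≤ p.1) ∧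
        3 * p.1 - (∑ i, p.2 i) ≤ 1} =
      ENNReal.ofReal (1 / 288) := by
  have hset : {p : ℝ × (Fin 3 → ℝ) |
        (∀ i, 0 ≤ p.2 i) ∧
        (∀ i j : Fin 3, i ≠ j → p.2 i + p.2 j ≤ p.1) ∧
        3 * p.1 - (∑ i, p.2 i) ≤ 1} = nS1 ∪ nS2 := by
    ext p
    have hsum3 : (∑ i, p.2 i) = p.2 0 + p.2 1 + p.2 2 := Fin.sum_univ_three p.2
    simp only [Set.mem_setOf_eq, Set.mem_union, nS1, nS2]
    constructor
    · rintro ⟨h1, h2, h3⟩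
      rcases le_total (∑ i, p.2 i) p.1 with h | h
      · exact Or.inl ⟨h1, h, h3⟩
      · exact Or.inr ⟨h2 0 1 (by decide), h2 0 2 (by decide), h2 1 2 (by decide), h, h3⟩
    · rintro (⟨h1, h2, h3⟩ | ⟨h01, h02, h12, hs, h3⟩)
      · refine ⟨h1, ?_, h3⟩
        intro i j hij
        fin_cases i <;> fin_cases j <;> simp_all <;> linarith [h1 0, h1 1, h1 2]
      · have e0 : 0 ≤ p.2 0 := by linarith
        have e1 : 0 ≤ p.2 1 := by linarith
        have e2 : 0 ≤ p.2 2 := by linarith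
        refine ⟨?_, ?_, h3⟩
        · intro i; fin_cases i <;> assumption
        · intro i j hij
          fin_cases i <;> fin_cases j <;> simp_all <;> linarith
  have hvol1 : volume nS1 = ENNReal.ofReal (1/576) := volS1
  rw [hset, measure_union₀ nS2_meas.nullMeasurableSet inter_null, vol_nS2_eq, hvol1,
    ← ENNReal.ofReal_add (by norm_num) (by norm_num)]
  norm_num
end

section
/- The Lebesgue measure in ℝ⁴ of the set { (a, b₁, b₂, b₃) : 0 ≤ b₁ ≤ a, b₂ ≤ 0, b₃ ≤ 0, and 3a − (b₁ + b₂ + b₃) ≤ 1 } equals 1/144. -/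
open MeasureTheory

open Set in

lemma vol1 (t : ℝ) :
    ∫⁻ x in Set.Iic (0:ℝ), ENNReal.ofReal (t + x) = ENNReal.ofReal (max t 0 ^ 2 / 2) := by
  rcases le_or_gt t 0 with ht | ht
  · rw [max_eq_right ht]
    rw [setLIntegral_congr_fun measurableSet_Iic
      (fun x hx => ?_), lintegral_zero]
    · norm_num
    · simp only [ENNReal.ofReal_eq_zero]; linarith [hx.out]
  · have h0 : (-t : ℝ) ≤ 0 := by linarith
    rw [max_eq_left ht.le, ← Set.Iic_union_Ioc_eq_Iic h0,
      lintegral_union measurableSet_Ioc (Set.Iic_disjoint_Ioc le_rfl)]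
    have h1 : ∫⁻ x in Set.Iic (-t), ENNReal.ofReal (t + x) = 0 := by
      rw [setLIntegral_congr_fun measurableSet_Iic
        (fun x hx => ?_), lintegral_zero]
      simp only [ENNReal.ofReal_eq_zero]; linarith [hx.out]
    have h2 : ∫⁻ x in Set.Ioc (-t) 0, ENNReal.ofReal (t + x) = ENNReal.ofReal (t ^ 2 / 2) := by
      rw [← ofReal_integral_eq_lintegral_ofReal]
      · congr 1
        rw [← intervalIntegral.integral_of_le h0]
        have : ∫ x in (-t)..0, (t + x) = (t * 0 + 0 ^ 2 / 2) - (t * (-t) + (-t) ^ 2 / 2) := by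
          apply intervalIntegral.integral_eq_sub_of_hasDerivAt (f := fun x => t * x + x ^ 2 / 2)
          · intro x _
            have := ((hasDerivAt_id x).const_mul t).add
              (((hasDerivAt_id x).pow 2).div_const 2)
            convert this using 1
            · rfl
            simp only [id]; ring
          · exact (continuous_const.add continuous_id).intervalIntegrable _ _
        rw [this]; ring
      · exact (continuous_const.add continuous_id).integrableOn_Ioc
      · filter_upwards [ae_restrict_mem measurableSet_Ioc] with x hx
        have := hx.1; dsimp; linarith
    rw [h1, h2, zero_add]

lemma vol2 (c : ℝ) :
    volume {s : ℝ × ℝ | s.1 ≤ 0 ∧ s.2 ≤ 0 ∧ c ≤ s.1 + s.2} =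
      ENNReal.ofReal (max (-c) 0 ^ 2 / 2) := by
  have hm : MeasurableSet {s : ℝ × ℝ | s.1 ≤ 0 ∧ s.2 ≤ 0 ∧ c ≤ s.1 + s.2} := by
    apply MeasurableSet.inter (measurableSet_le measurable_fst measurable_const)
    exact MeasurableSet.inter (measurableSet_le measurable_snd measurable_const)
      (measurableSet_le measurable_const (measurable_fst.add measurable_snd))
  rw [Measure.volume_eq_prod, Measure.prod_apply hm]
  have key : ∀ x : ℝ, volume (Prod.mk x ⁻¹' {s : ℝ × ℝ | s.1 ≤ 0 ∧ s.2 ≤ 0 ∧ c ≤ s.1 + s.2}) =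
      (Set.Iic (0:ℝ)).indicator (fun x => ENNReal.ofReal ((-c) + x)) x := by
    intro x
    by_cases hx : x ≤ 0
    · have hset : Prod.mk x ⁻¹' {s : ℝ × ℝ | s.1 ≤ 0 ∧ s.2 ≤ 0 ∧ c ≤ s.1 + s.2} =
          Set.Icc (c - x) 0 := by
        ext y
        simp only [Set.mem_preimage, Set.mem_setOf_eq, Set.mem_Icc]
        constructor
        · rintro ⟨_, h2, h3⟩; exact ⟨by linarith, h2⟩
        · rintro ⟨h1, h2⟩; exact ⟨hx, h2, by linarith⟩
      rw [hset, Real.volume_Icc, Set.indicator_of_mem (Set.mem_Iic.mpr hx)]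
      congr 1; ring
    · have hset : Prod.mk x ⁻¹' {s : ℝ × ℝ | s.1 ≤ 0 ∧ s.2 ≤ 0 ∧ c ≤ s.1 + s.2} = ∅ := by
        ext y; simp only [Set.mem_preimage, Set.mem_setOf_eq, Set.mem_empty_iff_false,
          iff_false]
        rintro ⟨h1, _, _⟩; exact hx h1
      rw [hset, Set.indicator_of_notMem (by simpa using hx), measure_empty]
  simp_rw [key]
  rw [lintegral_indicator measurableSet_Iic]
  exact vol1 (-c)

lemma vol3 (a : ℝ) :
    volume {r : ℝ × ℝ × ℝ | 0 ≤ r.1 ∧ r.1 ≤ a ∧ r.2.1 ≤ 0 ∧ r.2.2 ≤ 0 ∧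
        3 * a - (r.1 + r.2.1 + r.2.2) ≤ 1} =
      ∫⁻ b in Set.Icc (0:ℝ) a, ENNReal.ofReal (max (1 + b - 3 * a) 0 ^ 2 / 2) := by
  have hm : MeasurableSet {r : ℝ × ℝ × ℝ | 0 ≤ r.1 ∧ r.1 ≤ a ∧ r.2.1 ≤ 0 ∧ r.2.2 ≤ 0 ∧
      3 * a - (r.1 + r.2.1 + r.2.2) ≤ 1} := by
    refine MeasurableSet.inter (measurableSet_le measurable_const measurable_fst) ?_
    refine MeasurableSet.inter (measurableSet_le measurable_fst measurable_const) ?_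
    refine MeasurableSet.inter (measurableSet_le (measurable_fst.comp measurable_snd) measurable_const) ?_
    refine MeasurableSet.inter (measurableSet_le (measurable_snd.comp measurable_snd) measurable_const) ?_
    exact measurableSet_le (measurable_const.sub ((measurable_fst.add
      (measurable_fst.comp measurable_snd)).add (measurable_snd.comp measurable_snd))) measurable_const
  rw [Measure.volume_eq_prod, Measure.prod_apply hm]
  have key : ∀ b : ℝ, volume (Prod.mk b ⁻¹' {r : ℝ × ℝ × ℝ | 0 ≤ r.1 ∧ r.1 ≤ a ∧ r.2.1 ≤ 0 ∧
        r.2.2 ≤ 0 ∧ 3 * a - (r.1 + r.2.1 + r.2.2) ≤ 1}) =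
      (Set.Icc (0:ℝ) a).indicator (fun b => ENNReal.ofReal (max (1 + b - 3 * a) 0 ^ 2 / 2)) b := by
    intro b
    by_cases hb : b ∈ Set.Icc (0:ℝ) a
    · have hset : Prod.mk b ⁻¹' {r : ℝ × ℝ × ℝ | 0 ≤ r.1 ∧ r.1 ≤ a ∧ r.2.1 ≤ 0 ∧
          r.2.2 ≤ 0 ∧ 3 * a - (r.1 + r.2.1 + r.2.2) ≤ 1} =
          {s : ℝ × ℝ | s.1 ≤ 0 ∧ s.2 ≤ 0 ∧ (3 * a - b - 1) ≤ s.1 + s.2} := by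
        ext s
        simp only [Set.mem_preimage, Set.mem_setOf_eq]
        constructor
        · rintro ⟨_, _, h3, h4, h5⟩; exact ⟨h3, h4, by linarith⟩
        · rintro ⟨h3, h4, h5⟩; exact ⟨hb.1, hb.2, h3, h4, by linarith⟩
      rw [hset, vol2, Set.indicator_of_mem hb]
      congr 2
      ring_nf
    · have hset : Prod.mk b ⁻¹' {r : ℝ × ℝ × ℝ | 0 ≤ r.1 ∧ r.1 ≤ a ∧ r.2.1 ≤ 0 ∧
          r.2.2 ≤ 0 ∧ 3 * a - (r.1 + r.2.1 + r.2.2) ≤ 1} = ∅ := by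
        ext s
        simp only [Set.mem_preimage, Set.mem_setOf_eq, Set.mem_empty_iff_false, iff_false]
        rintro ⟨h1, h2, _⟩
        exact hb ⟨h1, h2⟩
      rw [hset, Set.indicator_of_notMem hb, measure_empty]
  simp_rw [key]
  rw [lintegral_indicator measurableSet_Icc]

lemma cont_integrand (a : ℝ) : Continuous (fun b : ℝ => max (1 + b - 3 * a) 0 ^ 2 / 2) := by
  exact (((continuous_const.add continuous_id).sub continuous_const).max
    continuous_const).pow 2 |>.div_const 2

lemma step (a : ℝ) (ha : 0 ≤ a) :
    ∫⁻ b in Set.Icc (0:ℝ) a, ENNReal.ofReal (max (1 + b - 3 * a) 0 ^ 2 / 2) =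
      ENNReal.ofReal (∫ b in (0:ℝ)..a, max (1 + b - 3 * a) 0 ^ 2 / 2) := by
  rw [← Measure.restrict_congr_set Ioc_ae_eq_Icc,
    ← ofReal_integral_eq_lintegral_ofReal ((cont_integrand a).integrableOn_Ioc)
      (Filter.Eventually.of_forall (fun b => by positivity)),
    intervalIntegral.integral_of_le ha]

lemma eval1 (a : ℝ) (h1 : 0 ≤ a) (h2 : a ≤ 1/3) :
    ∫ b in (0:ℝ)..a, max (1 + b - 3 * a) 0 ^ 2 / 2 =
      ((1 - 2*a)^3 - (1 - 3*a)^3) / 6 := by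
  have hcg : ∫ b in (0:ℝ)..a, max (1 + b - 3 * a) 0 ^ 2 / 2 =
      ∫ b in (0:ℝ)..a, (1 + b - 3 * a) ^ 2 / 2 := by
    apply intervalIntegral.integral_congr
    intro b hb
    rw [Set.uIcc_of_le (by linarith : (0:ℝ) ≤ a)] at hb
    obtain ⟨l, r⟩ := hb
    dsimp only
    rw [max_eq_left (by linarith)]
  rw [hcg]
  have := intervalIntegral.integral_eq_sub_of_hasDerivAt
    (f := fun b => (1 + b - 3 * a) ^ 3 / 6)
    (f' := fun b => (1 + b - 3 * a) ^ 2 / 2) (a := 0) (b := a)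
    (fun x _ => by
      have := ((((hasDerivAt_id x).const_add 1).sub_const (3 * a)).pow 3).div_const 6
      convert this using 1
      · rfl
      · rfl
      simp only [id]; ring)
    (((((continuous_const.add continuous_id).sub continuous_const).pow 2).div_const
      2).intervalIntegrable _ _)
  rw [this]
  ring

lemma eval2 (a : ℝ) (h1 : 1/3 ≤ a) (h2 : a ≤ 1/2) :
    ∫ b in (0:ℝ)..a, max (1 + b - 3 * a) 0 ^ 2 / 2 = (1 - 2*a)^3 / 6 := by
  have hsplit := intervalIntegral.integral_add_adjacent_intervals
    (a := (0:ℝ)) (b := 3 * a - 1) (c := a) (μ := volume)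
    ((cont_integrand a).intervalIntegrable _ _)
    ((cont_integrand a).intervalIntegrable _ _)
  rw [← hsplit]
  have hz : ∫ b in (0:ℝ)..(3 * a - 1), max (1 + b - 3 * a) 0 ^ 2 / 2 = 0 := by
    have : ∫ b in (0:ℝ)..(3 * a - 1), max (1 + b - 3 * a) 0 ^ 2 / 2 =
        ∫ b in (0:ℝ)..(3 * a - 1), (0:ℝ) := by
      apply intervalIntegral.integral_congr
      intro b hb
      rw [Set.uIcc_of_le (by linarith : (0:ℝ) ≤ 3 * a - 1)] at hb
      obtain ⟨l, r⟩ := hb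
      dsimp only
      rw [max_eq_right (by linarith)]
      norm_num
    rw [this, intervalIntegral.integral_zero]
  have h2' : ∫ b in (3 * a - 1)..a, max (1 + b - 3 * a) 0 ^ 2 / 2 = (1 - 2*a)^3 / 6 := by
    have hcg : ∫ b in (3 * a - 1)..a, max (1 + b - 3 * a) 0 ^ 2 / 2 =
        ∫ b in (3 * a - 1)..a, (1 + b - 3 * a) ^ 2 / 2 := by
      apply intervalIntegral.integral_congr
      intro b hb
      rw [Set.uIcc_of_le (by linarith : 3 * a - 1 ≤ a)] at hb
      obtain ⟨l, r⟩ := hb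
      dsimp only
      rw [max_eq_left (by linarith)]
    rw [hcg]
    have := intervalIntegral.integral_eq_sub_of_hasDerivAt
      (f := fun b => (1 + b - 3 * a) ^ 3 / 6)
      (f' := fun b => (1 + b - 3 * a) ^ 2 / 2) (a := 3 * a - 1) (b := a)
      (fun x _ => by
        have := ((((hasDerivAt_id x).const_add 1).sub_const (3 * a)).pow 3).div_const 6
        convert this using 1
        · rfl
        · rfl
        simp only [id]; ring)
      (((((continuous_const.add continuous_id).sub continuous_const).pow 2).div_const
        2).intervalIntegrable _ _)
    rw [this]
    ring
  rw [hz, h2', zero_add]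

noncomputable def Gfun : ℝ → ℝ :=
  fun a => if a ≤ 1/3 then ((1-2*a)^3-(1-3*a)^3)/6 else (1-2*a)^3/6

lemma contPoly1 : Continuous (fun a : ℝ => ((1-2*a)^3-(1-3*a)^3)/6) := by
  apply Continuous.div_const
  exact (((continuous_const.sub (continuous_const.mul continuous_id)).pow 3).sub
    ((continuous_const.sub (continuous_const.mul continuous_id)).pow 3))

lemma contPoly2 : Continuous (fun a : ℝ => (1-2*a)^3/6) := by
  exact ((continuous_const.sub (continuous_const.mul continuous_id)).pow 3).div_const 6

lemma Gfun_int : IntegrableOn Gfun (Set.Ioc (0:ℝ) (1/2)) volume := by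
  rw [← Set.Ioc_union_Ioc_eq_Ioc (by norm_num : (0:ℝ) ≤ 1/3) (by norm_num : (1/3:ℝ) ≤ 1/2),
    integrableOn_union]
  constructor
  · apply (contPoly1.integrableOn_Ioc).congr_fun ?_ measurableSet_Ioc
    intro a ha
    simp only [Gfun, if_pos ha.2]
  · apply (contPoly2.integrableOn_Ioc).congr_fun ?_ measurableSet_Ioc
    intro a ha
    simp only [Gfun, if_neg (not_le.mpr ha.1)]

lemma ftc1 : ∫ a in (0:ℝ)..(1/3), ((1-2*a)^3-(1-3*a)^3)/6 = 13/1944 := by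
  have := intervalIntegral.integral_eq_sub_of_hasDerivAt
    (f := fun a => (-(1-2*a)^4/8 + (1-3*a)^4/12)/6)
    (f' := fun a => ((1-2*a)^3-(1-3*a)^3)/6) (a := 0) (b := (1/3:ℝ))
    (fun x _ => by
      have h2 : HasDerivAt (fun a : ℝ => 1 - 2*a) (-2) x := by
        simpa using ((hasDerivAt_id x).const_mul 2).const_sub 1
      have h3 : HasDerivAt (fun a : ℝ => 1 - 3*a) (-3) x := by
        simpa using ((hasDerivAt_id x).const_mul 3).const_sub 1
      have := ((((h2.pow 4).neg.div_const 8).add ((h3.pow 4).div_const 12)).div_const 6)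
      convert this using 1
      · rfl
      · rfl
      ring)
    ((contPoly1).intervalIntegrable _ _)
  rw [this]
  norm_num

lemma ftc2 : ∫ a in (1/3:ℝ)..(1/2), (1-2*a)^3/6 = 1/3888 := by
  have := intervalIntegral.integral_eq_sub_of_hasDerivAt
    (f := fun a => -(1-2*a)^4/48)
    (f' := fun a => (1-2*a)^3/6) (a := (1/3:ℝ)) (b := (1/2:ℝ))
    (fun x _ => by
      have h2 : HasDerivAt (fun a : ℝ => 1 - 2*a) (-2) x := by
        simpa using ((hasDerivAt_id x).const_mul 2).const_sub 1
      have := (h2.pow 4).neg.div_const 48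
      convert this using 1
      · rfl
      · rfl
      ring)
    ((contPoly2).intervalIntegrable _ _)
  rw [this]
  norm_num

lemma final_real : ∫ a in Set.Ioc (0:ℝ) (1/2), Gfun a = 1/144 := by
  rw [← Set.Ioc_union_Ioc_eq_Ioc (by norm_num : (0:ℝ) ≤ 1/3) (by norm_num : (1/3:ℝ) ≤ 1/2),
    setIntegral_union (Set.Ioc_disjoint_Ioc_of_le le_rfl) measurableSet_Ioc]
  · have e1 : ∫ a in Set.Ioc (0:ℝ) (1/3), Gfun a =
        ∫ a in Set.Ioc (0:ℝ) (1/3), ((1-2*a)^3-(1-3*a)^3)/6 := by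
      apply setIntegral_congr_fun measurableSet_Ioc
      intro a ha
      simp only [Gfun, if_pos ha.2]
    have e2 : ∫ a in Set.Ioc (1/3:ℝ) (1/2), Gfun a =
        ∫ a in Set.Ioc (1/3:ℝ) (1/2), (1-2*a)^3/6 := by
      apply setIntegral_congr_fun measurableSet_Ioc
      intro a ha
      simp only [Gfun, if_neg (not_le.mpr ha.1)]
    rw [e1, e2, ← intervalIntegral.integral_of_le (by norm_num : (0:ℝ) ≤ 1/3),
      ← intervalIntegral.integral_of_le (by norm_num : (1/3:ℝ) ≤ 1/2), ftc1, ftc2]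
    norm_num
  · apply (contPoly1.integrableOn_Ioc).congr_fun ?_ measurableSet_Ioc
    intro a ha
    simp only [Gfun, if_pos ha.2]
  · apply (contPoly2.integrableOn_Ioc).congr_fun ?_ measurableSet_Ioc
    intro a ha
    simp only [Gfun, if_neg (not_le.mpr ha.1)]


/-- The Zariski chamber on `S₃` supported on `{E₂, E₃}`: the Lebesgue measure in `ℝ⁴`
of `{(a, b₁, b₂, b₃) : 0 ≤ b₁ ≤ a, b₂ ≤ 0, b₃ ≤ 0, 3a − (b₁+b₂+b₃) ≤ 1}`
equals `1/144`. -/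
theorem chamber_volume_S3_E2E3 :
    volume {p : ℝ × ℝ × ℝ × ℝ |
        0 ≤ p.2.1 ∧ p.2.1 ≤ p.1 ∧ p.2.2.1 ≤ 0 ∧ p.2.2.2 ≤ 0 ∧
        3 * p.1 - (p.2.1 + p.2.2.1 + p.2.2.2) ≤ 1} =
      ENNReal.ofReal (1 / 144) := by
  set S := {p : ℝ × ℝ × ℝ × ℝ |
      0 ≤ p.2.1 ∧ p.2.1 ≤ p.1 ∧ p.2.2.1 ≤ 0 ∧ p.2.2.2 ≤ 0 ∧
      3 * p.1 - (p.2.1 + p.2.2.1 + p.2.2.2) ≤ 1} with hS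
  have hm : MeasurableSet S := by
    rw [hS]
    refine MeasurableSet.inter (measurableSet_le measurable_const
      (measurable_fst.comp measurable_snd)) ?_
    refine MeasurableSet.inter (measurableSet_le (measurable_fst.comp measurable_snd)
      measurable_fst) ?_
    refine MeasurableSet.inter (measurableSet_le
      (measurable_fst.comp (measurable_snd.comp measurable_snd)) measurable_const) ?_
    refine MeasurableSet.inter (measurableSet_le
      (measurable_snd.comp (measurable_snd.comp measurable_snd)) measurable_const) ?_
    exact measurableSet_le ((measurable_const.mul measurable_fst).sub
      (((measurable_fst.comp measurable_snd).add
        (measurable_fst.comp (measurable_snd.comp measurable_snd))).add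
        (measurable_snd.comp (measurable_snd.comp measurable_snd)))) measurable_const
  rw [Measure.volume_eq_prod, Measure.prod_apply hm]
  have key : ∀ a : ℝ, volume (Prod.mk a ⁻¹' S) =
      (Set.Ioc (0:ℝ) (1/2)).indicator (fun a => ENNReal.ofReal (Gfun a)) a := by
    intro a
    have hpre : volume (Prod.mk a ⁻¹' S) =
        ∫⁻ b in Set.Icc (0:ℝ) a, ENNReal.ofReal (max (1 + b - 3 * a) 0 ^ 2 / 2) := by
      have hid : Prod.mk a ⁻¹' S = {r : ℝ × ℝ × ℝ | 0 ≤ r.1 ∧ r.1 ≤ a ∧ r.2.1 ≤ 0 ∧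
          r.2.2 ≤ 0 ∧ 3 * a - (r.1 + r.2.1 + r.2.2) ≤ 1} := rfl
      rw [hid, vol3 a]
    by_cases ha : a ∈ Set.Ioc (0:ℝ) (1/2)
    · rw [hpre, step a ha.1.le, Set.indicator_of_mem ha]
      by_cases h3 : a ≤ 1/3
      · rw [eval1 a ha.1.le h3]
        simp only [Gfun, if_pos h3]
      · rw [eval2 a (le_of_not_ge h3) ha.2]
        simp only [Gfun, if_neg h3]
    · rw [Set.indicator_of_notMem ha, hpre]
      rcases le_or_gt a 0 with h0 | hpos
      · have hnull : volume (Set.Icc (0:ℝ) a) = 0 := by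
          rw [Real.volume_Icc]
          simp only [ENNReal.ofReal_eq_zero]
          linarith
        rw [Measure.restrict_eq_zero.mpr hnull, lintegral_zero_measure]
      · have h0 : 1/2 < a := by
          by_contra hh
          push_neg at hh
          exact ha ⟨hpos, hh⟩
        rw [step a (by linarith)]
        have : ∫ b in (0:ℝ)..a, max (1 + b - 3 * a) 0 ^ 2 / 2 =
            ∫ b in (0:ℝ)..a, (0:ℝ) := by
          apply intervalIntegral.integral_congr
          intro b hb
          rw [Set.uIcc_of_le (by linarith : (0:ℝ) ≤ a)] at hb
          obtain ⟨l, r⟩ := hb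
          dsimp only
          rw [max_eq_right (by linarith)]
          norm_num
        rw [this, intervalIntegral.integral_zero, ENNReal.ofReal_zero]
  simp_rw [key]
  rw [lintegral_indicator measurableSet_Ioc,
    ← ofReal_integral_eq_lintegral_ofReal Gfun_int ?_, final_real]
  · filter_upwards [ae_restrict_mem measurableSet_Ioc] with a ha
    simp only [Pi.zero_apply]
    by_cases h3 : a ≤ 1/3
    · simp only [Gfun, if_pos h3]
      have h4 : 0 ≤ (1-2*a)^2 + (1-2*a)*(1-3*a) + (1-3*a)^2 := by
        nlinarith [sq_nonneg ((1-2*a)+(1-3*a)), sq_nonneg ((1-2*a)-(1-3*a))]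
      nlinarith [mul_nonneg ha.1.le h4]
    · simp only [Gfun, if_neg h3]
      have : (0:ℝ) ≤ 1-2*a := by linarith [ha.2]
      positivity
end
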